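/- arXiv:1302.0160 — 7 statements merged into one kernel-verified Lean document; each statement's English description precedes it below -/
import Mathlib

section
/- Let X be a Banach space, let {f_n : n ∈ ℕ} ⊂ X* be a countable relative boundary, and let (a_n)_{n∈ℕ} be a decreasing sequence of real numbers with a_n > 1 for all n and a_n → 1. Then the set {a_n f_n : n ∈ ℕ} has property (*). -/
open NormedSpace Filter Set Topology Pointwise

noncomputable section

/-- `g` is a weak-* limit point of `F`: every weak-* neighbourhood of `g`
contains infinitely many points of `F`. -/
def IsWeakStarLimitPoint {X : Type*} [NormedAddCommGroup X] [NormedSpace ℝ X]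
    (F : Set (StrongDual ℝ X)) (g : StrongDual ℝ X) : Prop :=
  ∀ U : Set (WeakDual ℝ X), IsOpen U → StrongDual.toWeakDual g ∈ U →
    {f : StrongDual ℝ X | f ∈ F ∧ StrongDual.toWeakDual f ∈ U}.Infinite

/-- Property (*) of a set of functionals. -/
def PropertyStar {X : Type*} [NormedAddCommGroup X] [NormedSpace ℝ X]
    (F : Set (StrongDual ℝ X)) : Prop :=
  ∀ g : StrongDual ℝ X, IsWeakStarLimitPoint F g →
    ∀ x : X, sSup ((fun f : StrongDual ℝ X => f x) '' F) = 1 → g x < 1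

/-- `F` is a relative boundary. -/
def IsRelativeBoundary {X : Type*} [NormedAddCommGroup X] [NormedSpace ℝ X]
    (F : Set (StrongDual ℝ X)) : Prop :=
  ∀ x : X, sSup ((fun f : StrongDual ℝ X => f x) '' F) = 1 → ∃ f ∈ F, f x = 1

theorem stmt0 {X : Type*} [NormedAddCommGroup X] [NormedSpace ℝ X] [CompleteSpace X]
    (f : ℕ → StrongDual ℝ X) (a : ℕ → ℝ)
    (hrel : IsRelativeBoundary (Set.range f))
    (ha : ∀ n, 1 < a n) (hdec : Antitone a)
    (hlim : Tendsto a atTop (𝓝 1)) :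
    PropertyStar (Set.range fun n => a n • f n) := by
  intro g hg x hx
  by_contra hgx
  push_neg at hgx
  have hsr : ((fun h : StrongDual ℝ X => h x) '' Set.range fun n => a n • f n)
      = Set.range fun n => a n * f n x := by
    rw [← Set.range_comp]; rfl
  rw [hsr] at hx
  have hbdd : BddAbove (Set.range fun n => a n * f n x) := by
    by_contra h
    rw [Real.sSup_of_not_bddAbove h] at hx
    norm_num at hx
  have hle : ∀ n, a n * f n x ≤ 1 := by
    intro n
    have := le_csSup hbdd ⟨n, rfl⟩
    rw [hx] at this
    exact this
  have hapos : ∀ n, (0 : ℝ) < a n := fun n => lt_trans one_pos (ha n)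
  have hflt : ∀ n, f n x < 1 := by
    intro n
    by_contra h
    push_neg at h
    nlinarith [ha n, hle n]
  -- arbitrarily large indices with value close to 1
  have hbig : ∀ δ : ℝ, 0 < δ → ∀ N : ℕ, ∃ n, N ≤ n ∧ 1 - δ < a n * f n x := by
    intro δ hδ N
    by_contra h
    push_neg at h
    have hopen : IsOpen {h : WeakDual ℝ X | 1 - δ < h x} := by
      have hc : Continuous fun h : WeakDual ℝ X => h x := WeakDual.eval_continuous x
      exact isOpen_Ioi.preimage hc
    have hmem : StrongDual.toWeakDual g ∈ {h : WeakDual ℝ X | 1 - δ < h x} := by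
      have hgx' : (StrongDual.toWeakDual g) x = g x := rfl
      simp only [Set.mem_setOf_eq, hgx']
      linarith
    have hinf := hg _ hopen hmem
    have hfin : ({h : StrongDual ℝ X | h ∈ (Set.range fun n => a n • f n) ∧
        StrongDual.toWeakDual h ∈ {h : WeakDual ℝ X | 1 - δ < h x}}).Finite := by
      apply Set.Finite.subset ((Set.finite_Iio N).image (fun n => a n • f n))
      rintro h' ⟨⟨m, rfl⟩, hx'⟩
      refine ⟨m, ?_, rfl⟩
      simp only [Set.mem_setOf_eq] at hx'
      have hval : 1 - δ < a m * f m x := hx'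
      by_contra hm
      simp only [Set.mem_Iio, not_lt] at hm
      exact absurd hval (not_lt.2 (h m hm))
    exact hinf hfin
  -- sup of f n x equals 1
  have hbdd2 : BddAbove (Set.range fun n => f n x) :=
    ⟨1, by rintro y ⟨n, rfl⟩; exact (hflt n).le⟩
  have hfsup : sSup ((fun h : StrongDual ℝ X => h x) '' Set.range f) = 1 := by
    rw [← Set.range_comp]
    apply le_antisymm
    · exact csSup_le (Set.range_nonempty _) (by rintro y ⟨n, rfl⟩; exact (hflt n).le)
    · by_contra hlt
      push_neg at hlt
      set c := sSup (Set.range ((fun h : StrongDual ℝ X => h x) ∘ f)) with hc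
      have hfc : ∀ n, f n x ≤ c := fun n => le_csSup hbdd2 ⟨n, rfl⟩
      set δ : ℝ := (1 - c) / (2 + |c|) with hδdef
      have habs : 0 ≤ |c| := abs_nonneg c
      have hδpos : 0 < δ := div_pos (by linarith) (by linarith)
      have hδlt1 : δ < 1 := by
        rw [hδdef, div_lt_one (by linarith)]
        cases abs_cases c with
        | inl h => linarith [h.1, h.2]
        | inr h => linarith [h.1, h.2]
      have hδeq : δ * (2 + |c|) = 1 - c := by
        rw [hδdef]; field_simp
      obtain ⟨N, hN⟩ := (Metric.tendsto_atTop.1 hlim δ hδpos)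
      obtain ⟨n, hnN, hval⟩ := hbig δ hδpos N
      have han : a n < 1 + δ := by
        have := hN n hnN
        rw [Real.dist_eq, abs_lt] at this
        linarith [this.2]
      rcases lt_or_ge (f n x) 0 with hneg | hpos
      · have : a n * f n x < f n x := by nlinarith [ha n]
        linarith
      · have hc0 : 0 ≤ c := le_trans hpos (hfc n)
        have habsc : |c| = c := abs_of_nonneg hc0
        have h1 : a n * f n x ≤ (1 + δ) * f n x := by nlinarith
        have h2 : (1 + δ) * f n x ≤ (1 + δ) * c := by nlinarith [hfc n]
        rw [habsc] at hδeq
        nlinarith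
  obtain ⟨h', hh', hval⟩ := hrel x hfsup
  obtain ⟨m, rfl⟩ := hh'
  exact absurd hval (ne_of_lt (hflt m))

end
end

section
/- Let X be a Banach space, let H_n ⊂ B_{X*} be an increasing sequence of subsets of the dual unit ball, and let (a_n)_{n∈ℕ} be a decreasing sequence of real numbers converging to 1. Set H = ⋃_{n=1}^∞ H_n and F = ± ⋃_{n=1}^∞ a_n (H_n \ H_{n-1}) (where H_0 = ∅, and ±A denotes A ∪ (−A)). If each H_n has property (*), and sup{|h(x)| : h ∈ H} < sup{f(x) : f ∈ F} whenever x ∈ X is non-zero, then F has property (*). -/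
open NormedSpace Filter Set Topology Pointwise

noncomputable section

lemma wslp_mono {X : Type*} [NormedAddCommGroup X] [NormedSpace ℝ X]
    {S T : Set (StrongDual ℝ X)} (hST : S ⊆ T) {g : StrongDual ℝ X}
    (h : IsWeakStarLimitPoint S g) : IsWeakStarLimitPoint T g :=
  fun U hU hgU => (h U hU hgU).mono fun f hf => ⟨hST hf.1, hf.2⟩

lemma wslp_smul {X : Type*} [NormedAddCommGroup X] [NormedSpace ℝ X]
    {S : Set (StrongDual ℝ X)} {g : StrongDual ℝ X} {c : ℝ} (hc : c ≠ 0)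
    (h : IsWeakStarLimitPoint (c • S) g) :
    IsWeakStarLimitPoint S (c⁻¹ • g) := by
  intro U hU hgU
  have hcont : Continuous fun φ : WeakDual ℝ X => c⁻¹ • φ := continuous_const_smul _
  have h1 := h ((fun φ : WeakDual ℝ X => c⁻¹ • φ) ⁻¹' U) (hU.preimage hcont) hgU
  have hinj : Function.Injective fun f : StrongDual ℝ X => c⁻¹ • f :=
    smul_right_injective _ (inv_ne_zero hc)
  refine (h1.image hinj.injOn).mono ?_
  rintro f ⟨f', ⟨hf'1, hf'2⟩, rfl⟩
  exact ⟨(Set.mem_smul_set_iff_inv_smul_mem₀ hc _ _).mp hf'1, hf'2⟩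

lemma wslp_nonempty {X : Type*} [NormedAddCommGroup X] [NormedSpace ℝ X]
    {S : Set (StrongDual ℝ X)} {g : StrongDual ℝ X} (h : IsWeakStarLimitPoint S g) :
    S.Nonempty := by
  obtain ⟨f, hf, -⟩ := (h univ isOpen_univ (mem_univ _)).nonempty
  exact ⟨f, hf⟩

set_option maxHeartbeats 1600000 in
theorem stmt1 {X : Type*} [NormedAddCommGroup X] [NormedSpace ℝ X] [CompleteSpace X]
    (H : ℕ → Set (StrongDual ℝ X)) (a : ℕ → ℝ) (F : Set (StrongDual ℝ X))
    (hH0 : H 0 = ∅) (hmono : Monotone H)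
    (hball : ∀ n, H n ⊆ {f : StrongDual ℝ X | ‖f‖ ≤ 1})
    (hadec : ∀ m n : ℕ, 1 ≤ m → m ≤ n → a n ≤ a m)
    (halim : Tendsto a atTop (𝓝 1))
    (hF : F = (⋃ n, a n • (H n \ H (n - 1)) : Set (StrongDual ℝ X)) ∪ -(⋃ n, a n • (H n \ H (n - 1)) : Set (StrongDual ℝ X)))
    (hstar : ∀ n, PropertyStar (H n))
    (hsep : ∀ x : X, x ≠ 0 →
      sSup ((fun h : StrongDual ℝ X => |h x|) '' ⋃ n, H n) <
        sSup ((fun f : StrongDual ℝ X => f x) '' F)) :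
    PropertyStar F := by
  classical
  intro g hg x hx
  have htw : ∀ (f : StrongDual ℝ X) (y : X), StrongDual.toWeakDual f y = f y := fun _ _ => rfl
  -- x ≠ 0
  have hx0 : x ≠ 0 := by
    rintro rfl
    have h0 : sSup ((fun f : StrongDual ℝ X => f (0 : X)) '' F) ≤ 0 :=
      Real.sSup_le (by rintro r ⟨f, -, rfl⟩; simp) le_rfl
    rw [hx] at h0; linarith
  have hone : ∀ m, 1 ≤ m → (1 : ℝ) ≤ a m := fun m hm =>
    le_of_tendsto halim (eventually_atTop.2 ⟨m, fun k hk => hadec m k hm hk⟩)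
  -- decomposition lemma
  have hdec : ∀ n (h : StrongDual ℝ X), h ∈ H n → ∃ m, 1 ≤ m ∧ m ≤ n ∧ h ∈ H m \ H (m - 1) := by
    intro n h hh
    have hex : ∃ k, h ∈ H k := ⟨n, hh⟩
    have hpos : 1 ≤ Nat.find hex := by
      rcases Nat.eq_zero_or_pos (Nat.find hex) with h0 | h1
      · exfalso
        have := Nat.find_spec hex
        rw [h0, hH0] at this
        exact this
      · exact h1
    exact ⟨Nat.find hex, hpos, Nat.find_le hh, Nat.find_spec hex,
      Nat.find_min hex (Nat.sub_lt hpos one_pos)⟩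
  -- membership characterisation of F
  have hmemF : ∀ f ∈ F, ∃ m : ℕ, ∃ h : StrongDual ℝ X, 1 ≤ m ∧ h ∈ H m \ H (m - 1) ∧
      (f = a m • h ∨ f = -(a m • h)) := by
    intro f hf
    rw [hF] at hf
    rcases hf with hf | hf
    · obtain ⟨m, h, hh, rfl⟩ := mem_iUnion.mp hf
      rcases Nat.eq_zero_or_pos m with rfl | h1
      · rw [hH0] at hh; exact absurd hh.1 (notMem_empty _)
      · exact ⟨m, h, h1, hh, Or.inl rfl⟩
    · rw [Set.mem_neg] at hf
      obtain ⟨m, h, hh, hfh⟩ := mem_iUnion.mp hf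
      rcases Nat.eq_zero_or_pos m with rfl | h1
      · rw [hH0] at hh; exact absurd hh.1 (notMem_empty _)
      · exact ⟨m, h, h1, hh, Or.inr (by rw [show a m • h = -f from hfh, neg_neg])⟩
  have hFmem : ∀ m (h : StrongDual ℝ X), h ∈ H m \ H (m - 1) →
      a m • h ∈ F ∧ -(a m • h) ∈ F := by
    intro m h hh
    constructor
    · rw [hF]
      exact Or.inl (mem_iUnion.mpr ⟨m, Set.smul_mem_smul_set hh⟩)
    · rw [hF]
      refine Or.inr ?_
      rw [Set.mem_neg, neg_neg]
      exact mem_iUnion.mpr ⟨m, Set.smul_mem_smul_set hh⟩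
  -- boundedness of evaluation images
  have hFbdd : ∀ y : X, BddAbove ((fun f : StrongDual ℝ X => f y) '' F) := by
    intro y
    refine ⟨a 1 * ‖y‖, ?_⟩
    rintro r ⟨f, hf, rfl⟩
    obtain ⟨m, h, hm, hh, hfe⟩ := hmemF f hf
    have hn1 : ‖h‖ ≤ 1 := hball m hh.1
    have ha1 : a m ≤ a 1 := hadec 1 m le_rfl hm
    have h1m : (1 : ℝ) ≤ a m := hone m hm
    have hhy : |h y| ≤ ‖y‖ := by
      calc |h y| ≤ ‖h‖ * ‖y‖ := h.le_opNorm y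
        _ ≤ 1 * ‖y‖ := mul_le_mul_of_nonneg_right hn1 (norm_nonneg y)
        _ = ‖y‖ := one_mul _
    have habs : |f y| = a m * |h y| := by
      rcases hfe with rfl | rfl <;>
        simp [ContinuousLinearMap.smul_apply, smul_eq_mul, abs_mul,
          abs_of_nonneg (le_trans zero_le_one h1m)]
    have : |f y| ≤ a 1 * ‖y‖ := by
      rw [habs]
      exact mul_le_mul ha1 hhy (abs_nonneg _) (le_trans zero_le_one (hone 1 le_rfl))
    exact le_trans (le_abs_self _) this
  have hFle : ∀ f ∈ F, f x ≤ 1 := fun f hf => hx ▸ le_csSup (hFbdd x) ⟨f, hf, rfl⟩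
  -- the key estimate
  have hkey : ∀ n, 1 ≤ n → ∀ h ∈ H n, ∀ ε : ℝ, (ε = 1 ∨ ε = -1) →
      a n * (ε * h x) ≤ 1 := by
    intro n hn h hh ε hε
    obtain ⟨m, hm1, hmn, hhm⟩ := hdec n h hh
    have hfF : ε • (a m • h) ∈ F := by
      rcases hε with rfl | rfl
      · simpa using (hFmem m h hhm).1
      · convert (hFmem m h hhm).2 using 1; exact neg_one_smul ℝ (a m • h)
    have hval : ε * (a m * h x) ≤ 1 := by
      have := hFle _ hfF
      simpa [ContinuousLinearMap.smul_apply, smul_eq_mul, mul_assoc] using this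
    rcases le_or_gt (ε * h x) 0 with h0 | h0
    · have : a n * (ε * h x) ≤ 0 :=
        mul_nonpos_of_nonneg_of_nonpos (le_trans zero_le_one (hone n hn)) h0
      linarith
    · have : a n * (ε * h x) ≤ a m * (ε * h x) :=
        mul_le_mul_of_nonneg_right (hadec m n hm1 hmn) (le_of_lt h0)
      nlinarith
  by_cases hcase : ∃ n, ∃ ε : ℝ, (ε = 1 ∨ ε = -1) ∧
      IsWeakStarLimitPoint ((ε * a n) • (H n \ H (n - 1))) g
  · -- CASE 1
    obtain ⟨n, ε, hε, hlim⟩ := hcase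
    have hSne : (H n \ H (n - 1)).Nonempty := by
      obtain ⟨f, h, hh, -⟩ := wslp_nonempty hlim
      exact ⟨h, hh⟩
    have hn : 1 ≤ n := by
      rcases Nat.eq_zero_or_pos n with rfl | h1
      · obtain ⟨h, hh⟩ := hSne; rw [hH0] at hh; exact absurd hh.1 (notMem_empty _)
      · exact h1
    have han : (1 : ℝ) ≤ a n := hone n hn
    have hpos : (0 : ℝ) < a n := lt_of_lt_of_le one_pos han
    have hc0 : ε * a n ≠ 0 := by rcases hε with rfl | rfl <;> simp <;> linarith
    set c := ε * a n with hc
    obtain ⟨g', hg'⟩ : ∃ g' : StrongDual ℝ X, g' = c⁻¹ • g := ⟨_, rfl⟩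
    have hlim' : IsWeakStarLimitPoint (H n) g' := by
      rw [hg']
      exact wslp_mono (fun h hh => hh.1) (wslp_smul hc0 hlim)
    have hgx : g x = a n * g' (ε • x) := by
      have hg2 : g = c • g' := by rw [hg', smul_smul, mul_inv_cancel₀ hc0, one_smul]
      rw [hg2, ContinuousLinearMap.smul_apply, map_smul, smul_eq_mul, smul_eq_mul, hc]
      ring
    set u := sSup ((fun h : StrongDual ℝ X => h (ε • x)) '' H n) with hu
    have hHne : (H n).Nonempty := ⟨hSne.choose, hSne.choose_spec.1⟩
    have hHb : BddAbove ((fun h : StrongDual ℝ X => h (ε • x)) '' H n) := by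
      refine ⟨‖ε • x‖, ?_⟩
      rintro r ⟨h, hh, rfl⟩
      calc h (ε • x) ≤ |h (ε • x)| := le_abs_self _
        _ ≤ ‖h‖ * ‖ε • x‖ := h.le_opNorm _
        _ ≤ 1 * ‖ε • x‖ := mul_le_mul_of_nonneg_right (hball n hh) (norm_nonneg _)
        _ = ‖ε • x‖ := one_mul _
    have hau : u ≤ (a n)⁻¹ := by
      apply csSup_le (hHne.image _)
      rintro r ⟨h, hh, rfl⟩
      show h (ε • x) ≤ (a n)⁻¹
      have hk := hkey n hn h hh ε hε
      have hεx : h (ε • x) = ε * h x := by rw [map_smul, smul_eq_mul]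
      rw [hεx, inv_eq_one_div, le_div_iff₀ hpos]
      linarith
    have hanu : a n * u ≤ 1 := by
      calc a n * u ≤ a n * (a n)⁻¹ := mul_le_mul_of_nonneg_left hau (le_of_lt hpos)
        _ = 1 := mul_inv_cancel₀ (ne_of_gt hpos)
    rcases le_or_gt u 0 with hu0 | hu0
    · -- u ≤ 0 : then g' (ε • x) ≤ u ≤ 0
      have hgu : g' (ε • x) ≤ u := by
        by_contra hcon
        push_neg at hcon
        have hUo : IsOpen {φ : WeakDual ℝ X | u < φ (ε • x)} :=
          isOpen_lt continuous_const (WeakDual.eval_continuous _)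
        obtain ⟨h, hh, hhU⟩ := (hlim' _ hUo hcon).nonempty
        have : h (ε • x) ≤ u := le_csSup hHb ⟨h, hh, rfl⟩
        rw [Set.mem_setOf_eq, htw] at hhU
        linarith
      rw [hgx]
      nlinarith
    · -- u > 0 : use property (*) of H n
      have hsup1 : sSup ((fun h : StrongDual ℝ X => h (u⁻¹ • ε • x)) '' H n) = 1 := by
        have h1 : (fun h : StrongDual ℝ X => h (u⁻¹ • ε • x)) '' H n
            = (fun r : ℝ => u⁻¹ • r) '' ((fun h : StrongDual ℝ X => h (ε • x)) '' H n) := by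
          rw [Set.image_image]
          apply Set.image_congr
          intro h _
          rw [map_smul]
        rw [h1, Set.image_smul, Real.sSup_smul_of_nonneg (le_of_lt (inv_pos.mpr hu0)),
          ← hu, smul_eq_mul, inv_mul_cancel₀ (ne_of_gt hu0)]
      have hmain := hstar n g' hlim' (u⁻¹ • ε • x) hsup1
      rw [map_smul, smul_eq_mul] at hmain
      have hlt : g' (ε • x) < u := by
        have hip : (0 : ℝ) < u⁻¹ := inv_pos.mpr hu0
        nlinarith [inv_mul_cancel₀ (ne_of_gt hu0)]
      rw [hgx]
      nlinarith
  · -- CASE 2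
    push_neg at hcase
    have hU : ∀ n : ℕ, ∀ ε : ℝ, (ε = 1 ∨ ε = -1) → ∃ U : Set (WeakDual ℝ X),
        IsOpen U ∧ StrongDual.toWeakDual g ∈ U ∧
        {f : StrongDual ℝ X | f ∈ (ε * a n) • (H n \ H (n - 1)) ∧ StrongDual.toWeakDual f ∈ U}.Finite := by
      intro n ε hε
      have h1 := hcase n ε hε
      rw [IsWeakStarLimitPoint] at h1
      push_neg at h1
      obtain ⟨U, hUo, hUg, hUf⟩ := h1
      exact ⟨U, hUo, hUg, hUf⟩
    have h1 := fun n => hU n 1 (Or.inl rfl)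
    choose U1 hU1o hU1g hU1f using h1
    have h2 := fun n => hU n (-1) (Or.inr rfl)
    choose U2 hU2o hU2g hU2f using h2
    set s := sSup ((fun h : StrongDual ℝ X => |h x|) '' ⋃ n, H n) with hs
    have hs1 : s < 1 := by
      have := hsep x hx0
      rwa [hx] at this
    -- boundedness of |h x| on ⋃ H n
    have hHub : BddAbove ((fun h : StrongDual ℝ X => |h x|) '' ⋃ n, H n) := by
      refine ⟨‖x‖, ?_⟩
      rintro r ⟨h, hh, rfl⟩
      obtain ⟨m, hm⟩ := mem_iUnion.mp hh
      calc |h x| ≤ ‖h‖ * ‖x‖ := h.le_opNorm _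
        _ ≤ 1 * ‖x‖ := mul_le_mul_of_nonneg_right (hball m hm) (norm_nonneg _)
        _ = ‖x‖ := one_mul _
    have hsnn : 0 ≤ s := by
      obtain ⟨f, hfF, -⟩ := (hg univ isOpen_univ (mem_univ _)).nonempty
      obtain ⟨m, h, hm1, hh, -⟩ := hmemF f hfF
      have : |h x| ≤ s := le_csSup hHub ⟨h, mem_iUnion.mpr ⟨m, hh.1⟩, rfl⟩
      linarith [abs_nonneg (h x)]
    have hgs : g x ≤ s := by
      apply le_of_forall_pos_le_add
      intro ε hεp
      set δ := ε / 2 / (s + 1) with hδ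
      have hδp : 0 < δ := by
        apply div_pos (by linarith) (by linarith)
      have hδs : δ * (s + 1) = ε / 2 := by
        rw [hδ]
        field_simp
      obtain ⟨N, hN⟩ := eventually_atTop.mp (halim (Iio_mem_nhds (by linarith : (1:ℝ) < 1 + δ)))
      set V := {φ : WeakDual ℝ X | g x - ε / 2 < φ x} with hV
      have hVo : IsOpen V := isOpen_lt continuous_const (WeakDual.eval_continuous _)
      set W := V ∩ ⋂ m ∈ Finset.range (N + 1), (U1 m ∩ U2 m) with hW
      have hWo : IsOpen W :=
        hVo.inter (isOpen_biInter_finset fun m _ => (hU1o m).inter (hU2o m))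
      have hgW : StrongDual.toWeakDual g ∈ W := by
        refine ⟨?_, Set.mem_iInter₂.mpr fun m _ => ⟨hU1g m, hU2g m⟩⟩
        rw [hV, Set.mem_setOf_eq, htw]
        linarith
      have hT := hg W hWo hgW
      set B := ⋃ m ∈ Finset.range (N + 1),
          ({f : StrongDual ℝ X | f ∈ ((1 : ℝ) * a m) • (H m \ H (m - 1)) ∧ StrongDual.toWeakDual f ∈ U1 m} ∪
           {f : StrongDual ℝ X | f ∈ ((-1 : ℝ) * a m) • (H m \ H (m - 1)) ∧ StrongDual.toWeakDual f ∈ U2 m}) with hB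
      have hBfin : B.Finite :=
        Set.Finite.biUnion (Finset.range (N + 1)).finite_toSet
          (fun m _ => (hU1f m).union (hU2f m))
      obtain ⟨f, ⟨⟨hfF, hfW⟩, hfB⟩⟩ := (hT.diff hBfin).nonempty
      obtain ⟨m, h, hm1, hh, hfe⟩ := hmemF f hfF
      have ham : (1 : ℝ) ≤ a m := hone m hm1
      -- m > N
      have hmN : N < m := by
        by_contra hcon
        push_neg at hcon
        apply hfB
        rw [hB]
        refine Set.mem_biUnion (Finset.mem_range.mpr (Nat.lt_succ_of_le hcon)) ?_
        have hfU12 := Set.mem_iInter₂.mp hfW.2 m (Finset.mem_range.mpr (Nat.lt_succ_of_le hcon))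
        rcases hfe with rfl | rfl
        · exact Or.inl ⟨by rw [one_mul]; exact Set.smul_mem_smul_set hh, hfU12.1⟩
        · refine Or.inr ⟨?_, hfU12.2⟩
          have : -(a m • h) = ((-1 : ℝ) * a m) • h := by
            rw [neg_one_mul]; exact (neg_smul _ _).symm
          rw [this]
          exact Set.smul_mem_smul_set hh
      have haN : a m < 1 + δ := hN m (le_of_lt hmN)
      have hhx : |h x| ≤ s := le_csSup hHub ⟨h, mem_iUnion.mpr ⟨m, hh.1⟩, rfl⟩
      have hfx : f x ≤ s + ε / 2 := by
        have habs : |f x| = a m * |h x| := by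
          rcases hfe with rfl | rfl <;>
            simp [ContinuousLinearMap.smul_apply, smul_eq_mul, abs_mul,
              abs_of_nonneg (le_trans zero_le_one ham)]
        have h2 : a m * |h x| ≤ (1 + δ) * s :=
          mul_le_mul (le_of_lt haN) hhx (abs_nonneg _) (by linarith)
        have h3 : (1 + δ) * s ≤ s + ε / 2 := by nlinarith
        calc f x ≤ |f x| := le_abs_self _
          _ = a m * |h x| := habs
          _ ≤ (1 + δ) * s := h2
          _ ≤ s + ε / 2 := h3
      have hfV : g x - ε / 2 < f x := by
        have := hfW.1
        rwa [hV, Set.mem_setOf_eq, htw] at this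
      linarith
    linarith

end
end

section
/- Let X be a Banach space and suppose there are sets S_n ⊂ S_X and an increasing sequence H_n ⊂ B_{X*} of relative boundaries, such that S_X = ⋃_{n=1}^∞ S_n and the numbers b_n = inf{ sup{h(x) : h ∈ H_n} : x ∈ S_n } are strictly positive and converge to 1. Then there exists a sequence (a_n)_{n=1}^∞ of reals with a_n > 1 and an equivalent norm |||·||| on X such that the set F = ⋃_{n=1}^∞ a_n((H_n \ H_{n-1}) ∪ −(H_n \ H_{n-1})) (with H_0 = ∅) is a boundary of (X, |||·|||). Moreover, if each H_n has property (*), then F has property (*) and |||·||| is polyhedral. -/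
open NormedSpace Filter Set Topology Pointwise

noncomputable section

/-- `B` is a boundary for the norm `ν`: every element of `B` lies in the
`ν`-dual unit ball, and every `ν`-unit vector attains the value 1 at some member of `B`. -/
def IsBoundaryFor {X : Type*} [NormedAddCommGroup X] [NormedSpace ℝ X]
    (ν : X → ℝ) (B : Set (StrongDual ℝ X)) : Prop :=
  (∀ f ∈ B, ∀ x : X, f x ≤ ν x) ∧ ∀ x : X, ν x = 1 → ∃ f ∈ B, f x = 1

/-- `ν` is an equivalent norm on `X`. -/
def IsEquivNorm {X : Type*} [NormedAddCommGroup X] [NormedSpace ℝ X]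
    (ν : Seminorm ℝ X) : Prop :=
  ∃ c C : ℝ, 0 < c ∧ ∀ x : X, c * ‖x‖ ≤ ν x ∧ ν x ≤ C * ‖x‖

/-- A norm (given as a function) is polyhedral if the unit ball of every
finite-dimensional subspace is a polytope, i.e. the convex hull of finitely many points. -/
def IsPolyhedralNorm {X : Type*} [NormedAddCommGroup X] [NormedSpace ℝ X]
    (ν : X → ℝ) : Prop :=
  ∀ Y : Subspace ℝ X, FiniteDimensional ℝ Y →
    ∃ T : Set X, T.Finite ∧ {x : X | x ∈ Y ∧ ν x ≤ 1} = convexHull ℝ T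

/-- `E ⊆ X*` is weak-* locally relatively norm-compact. -/
def IsWeakStarLRC {X : Type*} [NormedAddCommGroup X] [NormedSpace ℝ X]
    (E : Set (StrongDual ℝ X)) : Prop :=
  ∀ y ∈ E, ∃ U : Set (WeakDual ℝ X), IsOpen U ∧ StrongDual.toWeakDual y ∈ U ∧
    IsCompact (closure (E ∩ (fun f : StrongDual ℝ X => StrongDual.toWeakDual f) ⁻¹' U))

/-- `E` is a countable union of weak-* LRC sets. -/
def IsSigmaWeakStarLRC {X : Type*} [NormedAddCommGroup X] [NormedSpace ℝ X]
    (E : Set (StrongDual ℝ X)) : Prop :=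
  ∃ E' : ℕ → Set (StrongDual ℝ X), E = ⋃ n, E' n ∧ ∀ n, IsWeakStarLRC (E' n)

/-- `E` is a countable union of weak-*-compact sets. -/
def IsWeakStarSigmaCompact {X : Type*} [NormedAddCommGroup X] [NormedSpace ℝ X]
    (E : Set (StrongDual ℝ X)) : Prop :=
  ∃ C : ℕ → Set (WeakDual ℝ X), (∀ n, IsCompact (C n)) ∧
    (fun f : StrongDual ℝ X => StrongDual.toWeakDual f) '' E = ⋃ n, C n

set_option maxHeartbeats 2000000 in
theorem stmt2 {X : Type*} [NormedAddCommGroup X] [NormedSpace ℝ X] [CompleteSpace X]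
    (S : ℕ → Set X) (H : ℕ → Set (StrongDual ℝ X)) (b : ℕ → ℝ)
    (hS : ∀ n, S n ⊆ Metric.sphere (0 : X) 1)
    (hcover : Metric.sphere (0 : X) 1 = ⋃ (n : ℕ) (_ : 1 ≤ n), S n)
    (hH0 : H 0 = ∅) (hmono : Monotone H)
    (hball : ∀ n, H n ⊆ {f : StrongDual ℝ X | ‖f‖ ≤ 1})
    (hrel : ∀ n, IsRelativeBoundary (H n))
    (hb : ∀ n, 1 ≤ n →
      b n = sInf ((fun x : X => sSup ((fun h : StrongDual ℝ X => h x) '' H n)) '' S n))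
    (hbpos : ∀ n, 1 ≤ n → 0 < b n)
    (hblim : Tendsto b atTop (𝓝 1)) :
    ∃ (a : ℕ → ℝ) (ν : Seminorm ℝ X), (∀ n, 1 ≤ n → 1 < a n) ∧ IsEquivNorm ν ∧
      IsBoundaryFor (fun x => ν x)
        (⋃ n, a n • ((H n \ H (n - 1)) ∪ -(H n \ H (n - 1))) : Set (StrongDual ℝ X)) ∧
      ((∀ n, PropertyStar (H n)) →
        PropertyStar (⋃ n, a n • ((H n \ H (n - 1)) ∪ -(H n \ H (n - 1))) : Set (StrongDual ℝ X)) ∧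
        IsPolyhedralNorm (fun x => ν x)) := by
  classical
  have hbl := Metric.tendsto_atTop.mp hblim
  -- uniform positive lower bound for b
  obtain ⟨c, hcpos, hcb⟩ : ∃ c : ℝ, 0 < c ∧ ∀ n, 1 ≤ n → c ≤ b n := by
    obtain ⟨K0, hK0⟩ := hbl (1/2) (by norm_num)
    have hK0' : ∀ n, K0 ≤ n → 1/2 < b n := by
      intro n hn
      have := hK0 n hn
      rw [Real.dist_eq] at this
      have := abs_lt.mp this
      linarith [this.1]
    have hcne : (insert (1/2:ℝ) ((Finset.Icc 1 K0).image b)).Nonempty :=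
      ⟨1/2, Finset.mem_insert_self _ _⟩
    refine ⟨(insert (1/2:ℝ) ((Finset.Icc 1 K0).image b)).min' hcne, ?_, ?_⟩
    · have hmem := Finset.min'_mem _ hcne
      rcases Finset.mem_insert.mp hmem with h | h
      · rw [h]; norm_num
      · obtain ⟨n, hn, hbn⟩ := Finset.mem_image.mp h
        rw [← hbn]; exact hbpos n (Finset.mem_Icc.mp hn).1
    · intro n hn
      rcases le_or_gt n K0 with h | h
      · exact Finset.min'_le _ _ (Finset.mem_insert_of_mem
          (Finset.mem_image_of_mem b (Finset.mem_Icc.mpr ⟨hn, h⟩)))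
      · calc (insert (1/2:ℝ) ((Finset.Icc 1 K0).image b)).min' hcne ≤ 1/2 :=
              Finset.min'_le _ _ (Finset.mem_insert_self _ _)
          _ ≤ b n := (hK0' n h.le).le
  -- construction of the scaling sequence a
  obtain ⟨a, h1a, hstrict, hab1, hsmall⟩ :
      ∃ a : ℕ → ℝ, (∀ n, 1 ≤ n → 1 < a n) ∧
        (∀ m n, 1 ≤ m → m < n → a n < a m) ∧
        (∀ n, 1 ≤ n → 1 < a n * b n) ∧
        (∀ t, 1 < t → ∃ N, 1 ≤ N ∧ a N < t) := by
    set d : ℕ → ℝ := fun k => if k = 0 then 0 else max 0 ((1 - b k) / b k) with hd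
    have hd0 : ∀ k, 0 ≤ d k := by
      intro k; by_cases h : k = 0 <;> simp [hd, h]
    have hdb : ∀ k, d k ≤ max 0 (1/c - 1) := by
      intro k; by_cases h : k = 0
      · simp [hd, h]
      · have h1 : 1 ≤ k := Nat.one_le_iff_ne_zero.mpr h
        have hcb' := hcb k h1
        have hbk : 0 < b k := lt_of_lt_of_le hcpos hcb'
        simp only [hd, if_neg h]
        refine max_le_max le_rfl ?_
        rw [div_le_iff₀ hbk]
        have h2 : (1/c - 1) * b k = b k / c - b k := by ring
        rw [h2]
        have h3 : 1 ≤ b k / c := (one_le_div hcpos).mpr hcb'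
        linarith
    have hbdd : ∀ n, BddAbove (d '' Ici n) := by
      intro n
      exact ⟨max 0 (1/c - 1), by rintro v ⟨k, _, rfl⟩; exact hdb k⟩
    have hne : ∀ n : ℕ, (d '' Ici n).Nonempty := fun n => ⟨d n, ⟨n, Set.self_mem_Ici, rfl⟩⟩
    set e : ℕ → ℝ := fun n => (n : ℝ)⁻¹ + sSup (d '' Ici n) with he
    have hsup_mem_le : ∀ n, d n ≤ sSup (d '' Ici n) :=
      fun n => le_csSup (hbdd n) ⟨n, Set.self_mem_Ici, rfl⟩
    have hsup_nonneg : ∀ n, 0 ≤ sSup (d '' Ici n) :=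
      fun n => le_trans (hd0 n) (hsup_mem_le n)
    have hsupanti : ∀ m n : ℕ, m ≤ n → sSup (d '' Ici n) ≤ sSup (d '' Ici m) := by
      intro m n h
      exact csSup_le_csSup (hbdd m) (hne n) (Set.image_mono (Ici_subset_Ici.mpr h))
    refine ⟨fun n => 1 + e n, ?_, ?_, ?_, ?_⟩
    · intro n hn
      show (1:ℝ) < 1 + e n
      have h0 : (0:ℝ) < (n:ℝ)⁻¹ := by
        have : (0:ℝ) < (n:ℝ) := by exact_mod_cast hn
        positivity
      have := hsup_nonneg n
      simp only [he]
      linarith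
    · intro m n h1m hmn
      show 1 + e n < 1 + e m
      have h1 : (n : ℝ)⁻¹ < (m : ℝ)⁻¹ := by
        apply inv_strictAnti₀
        · exact_mod_cast Nat.lt_of_lt_of_le Nat.zero_lt_one h1m
        · exact_mod_cast hmn
      have h2 := hsupanti m n hmn.le
      simp only [he]
      linarith
    · intro n hn
      show (1:ℝ) < (1 + e n) * b n
      have hbn : 0 < b n := lt_of_lt_of_le hcpos (hcb n hn)
      have hdn : (1 - b n) / b n ≤ d n := by
        simp only [hd, if_neg (Nat.one_le_iff_ne_zero.mp hn)]
        exact le_max_right _ _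
      have hinv : (0:ℝ) < (n:ℝ)⁻¹ := by
        have : (0:ℝ) < (n:ℝ) := by exact_mod_cast hn
        positivity
      have hlt : (1 - b n) / b n < e n := by
        have := hsup_mem_le n
        simp only [he]
        linarith
      rw [div_lt_iff₀ hbn] at hlt
      have : (1 + e n) * b n = b n + e n * b n := by ring
      linarith
    · intro t ht
      set η := (t - 1)/3 with hη
      have hηpos : 0 < η := by rw [hη]; linarith
      obtain ⟨K1, hK1⟩ := hbl (η/(1+η)) (by positivity)
      set N := max (max K1 1) (⌈1/η⌉₊ + 1) with hN
      have hN1 : 1 ≤ N := le_trans (le_max_right K1 1) (le_trans (le_max_left _ _) le_rfl)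
      refine ⟨N, hN1, ?_⟩
      show 1 + e N < t
      have h1 : 1/η < (N:ℝ) := by
        calc 1/η ≤ (⌈1/η⌉₊ : ℝ) := Nat.le_ceil _
          _ < (⌈1/η⌉₊ : ℝ) + 1 := by linarith
          _ = ((⌈1/η⌉₊ + 1 : ℕ) : ℝ) := by push_cast; ring
          _ ≤ (N : ℝ) := by exact_mod_cast Nat.cast_le.mpr (le_max_right _ _)
      have hNpos : (0:ℝ) < N := lt_trans (by positivity) h1
      have hNinv : (N : ℝ)⁻¹ < η := by
        rw [inv_lt_comm₀ hNpos hηpos]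
        rwa [one_div] at h1
      have hsupN : sSup (d '' Ici N) ≤ η := by
        apply csSup_le (hne N)
        rintro v ⟨k, hk, rfl⟩
        have hk1 : 1 ≤ k := le_trans hN1 hk
        have hkK1 : K1 ≤ k := le_trans (le_trans (le_max_left K1 1) (le_max_left _ _)) hk
        have hbk : 0 < b k := lt_of_lt_of_le hcpos (hcb k hk1)
        have hdist := hK1 k hkK1
        rw [Real.dist_eq] at hdist
        have habs := abs_lt.mp hdist
        simp only [hd, if_neg (Nat.one_le_iff_ne_zero.mp hk1)]
        apply max_le hηpos.le
        rw [div_le_iff₀ hbk]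
        have h1η : (0:ℝ) < 1 + η := by linarith
        have hbig : 1 - η/(1+η) < b k := by linarith [habs.1]
        have hmul : (1+η) * b k > (1+η) * (1 - η/(1+η)) :=
          mul_lt_mul_of_pos_left hbig h1η
        have heq : (1+η) * (1 - η/(1+η)) = 1 := by field_simp; ring
        nlinarith
      have hEN : e N = (N:ℝ)⁻¹ + sSup (d '' Ici N) := rfl
      have h2η : e N < t - 1 := by
        rw [hEN]
        rw [hη] at hNinv hsupN
        linarith
      linarith
  have hanti : ∀ m n, 1 ≤ m → m ≤ n → a n ≤ a m := by
    intro m n h1 h2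
    rcases h2.lt_or_eq with h | h
    · exact (hstrict m n h1 h).le
    · rw [h]
  set A := a 1 with hA
  have hA1 : 1 < A := h1a 1 le_rfl
  have hA0 : 0 < A := lt_trans one_pos hA1
  have hanA : ∀ n, 1 ≤ n → a n ≤ A := fun n hn => hanti 1 n le_rfl hn
  have hapos : ∀ n, 1 ≤ n → 0 < a n := fun n hn => lt_trans one_pos (h1a n hn)
  -- the candidate boundary set
  set F : Set (StrongDual ℝ X) :=
    ⋃ n, a n • ((H n \ H (n - 1)) ∪ -(H n \ H (n - 1))) with hF
  -- decomposition of members of F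
  have hFdec : ∀ f ∈ F, ∃ n h, 1 ≤ n ∧ h ∈ H n ∧ h ∉ H (n-1) ∧
      (f = a n • h ∨ f = a n • (-h)) := by
    intro f hf
    rw [hF] at hf
    obtain ⟨n, hn⟩ := Set.mem_iUnion.mp hf
    obtain ⟨g, hg, rfl⟩ := Set.mem_smul_set.mp hn
    have key : ∃ h, h ∈ H n ∧ h ∉ H (n-1) ∧ (a n • g = a n • h ∨ a n • g = a n • (-h)) := by
      rcases hg with hg | hg
      · exact ⟨g, hg.1, hg.2, Or.inl rfl⟩
      · rw [Set.mem_neg] at hg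
        exact ⟨-g, hg.1, hg.2, Or.inr (by rw [neg_neg])⟩
    obtain ⟨h, hh1, hh2, hh3⟩ := key
    refine ⟨n, h, ?_, hh1, hh2, hh3⟩
    by_contra hn0
    have : n = 0 := by omega
    rw [this, hH0] at hh1
    exact hh1
  have hFintro : ∀ n (h : StrongDual ℝ X), h ∈ H n → h ∉ H (n-1) →
      a n • h ∈ F ∧ a n • (-h) ∈ F := by
    intro n h hh hnh
    constructor
    · rw [hF]
      exact Set.mem_iUnion.mpr ⟨n, Set.mem_smul_set.mpr ⟨h, Or.inl ⟨hh, hnh⟩, rfl⟩⟩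
    · rw [hF]
      refine Set.mem_iUnion.mpr ⟨n, Set.mem_smul_set.mpr ⟨-h, Or.inr ?_, rfl⟩⟩
      rw [Set.mem_neg, neg_neg]
      exact ⟨hh, hnh⟩
  have hFneg : ∀ f ∈ F, -f ∈ F := by
    intro f hf
    obtain ⟨n, h, hn1, hh, hnh, hor⟩ := hFdec f hf
    rcases hor with rfl | rfl
    · rw [show -(a n • h) = a n • -h by simp]
      exact (hFintro n h hh hnh).2
    · rw [show -(a n • -h) = a n • h by simp]
      exact (hFintro n h hh hnh).1
  have hnorm : ∀ n (h : StrongDual ℝ X), h ∈ H n → ∀ x : X, |h x| ≤ ‖x‖ := by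
    intro n h hh x
    have h1 : ‖h‖ ≤ 1 := hball n hh
    calc |h x| = ‖h x‖ := (Real.norm_eq_abs _).symm
      _ ≤ ‖h‖ * ‖x‖ := h.le_opNorm x
      _ ≤ 1 * ‖x‖ := by nlinarith [norm_nonneg x]
      _ = ‖x‖ := one_mul _
  have habs : ∀ f ∈ F, ∀ x : X, |f x| ≤ A * ‖x‖ := by
    intro f hf x
    obtain ⟨n, h, hn1, hh, hnh, hor⟩ := hFdec f hf
    have hb1 : |h x| ≤ ‖x‖ := hnorm n h hh x
    have han := hapos n hn1
    have hAn := hanA n hn1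
    have : ∀ g : StrongDual ℝ X, |g x| ≤ ‖x‖ → |(a n • g) x| ≤ A * ‖x‖ := by
      intro g hg
      rw [ContinuousLinearMap.smul_apply, smul_eq_mul, abs_mul, abs_of_pos han]
      nlinarith [abs_nonneg (g x), norm_nonneg x]
    rcases hor with rfl | rfl
    · exact this h hb1
    · exact this (-h) (by rw [ContinuousLinearMap.neg_apply, abs_neg]; exact hb1)
  have hFnorm : ∀ f ∈ F, ‖f‖ ≤ A := by
    intro f hf
    apply ContinuousLinearMap.opNorm_le_bound _ hA0.le
    intro x
    rw [Real.norm_eq_abs]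
    exact habs f hf x
  -- the seminorm function
  set p : X → ℝ := fun x => sSup ((fun f : StrongDual ℝ X => f x) '' F) with hp
  have hpdef : ∀ x, p x = sSup ((fun f : StrongDual ℝ X => f x) '' F) := fun x => rfl
  have hbddp : ∀ x : X, BddAbove ((fun f : StrongDual ℝ X => f x) '' F) := by
    intro x
    refine ⟨A * ‖x‖, ?_⟩
    rintro v ⟨f, hf, rfl⟩
    exact le_trans (le_abs_self _) (habs f hf x)
  have hple : ∀ f ∈ F, ∀ x : X, f x ≤ p x := by
    intro f hf x
    exact le_csSup (hbddp x) (Set.mem_image_of_mem _ hf)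
  have hpub : ∀ x : X, p x ≤ A * ‖x‖ := by
    intro x
    apply Real.sSup_le
    · rintro v ⟨f, hf, rfl⟩
      exact le_trans (le_abs_self _) (habs f hf x)
    · positivity
  have hpabs : ∀ f ∈ F, ∀ x : X, |f x| ≤ p x := by
    intro f hf x
    rw [abs_le]
    refine ⟨?_, hple f hf x⟩
    have := hple (-f) (hFneg f hf) x
    rw [ContinuousLinearMap.neg_apply] at this
    linarith
  have hp0 : ∀ x : X, 0 ≤ p x := by
    intro x
    rcases Set.eq_empty_or_nonempty F with h | ⟨f, hf⟩
    · rw [hpdef, h]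
      simp [Real.sSup_empty]
    · exact le_trans (abs_nonneg _) (hpabs f hf x)
  -- sSup scaling helpers
  have hsupmul : ∀ (r : ℝ), 0 ≤ r → ∀ s : Set ℝ, sSup ((fun t => r * t) '' s) = r * sSup s := by
    intro r hr s
    have h1 : (fun t : ℝ => r * t) '' s = r • s := by
      rw [← Set.image_smul]
      apply Set.image_congr'
      intro t
      rw [smul_eq_mul]
    rw [h1, Real.sSup_smul_of_nonneg hr, smul_eq_mul]
  have himgcomp : ∀ (w : X) (r : ℝ) (T : Set (StrongDual ℝ X)),
      (fun h : StrongDual ℝ X => h (r • w)) '' T = (fun t => r * t) '' ((fun h : StrongDual ℝ X => h w) '' T) := by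
    intro w r T
    rw [← Set.image_comp]
    apply Set.image_congr'
    intro h
    simp [map_smul]
  have hsupsmul : ∀ (w : X) (r : ℝ), 0 ≤ r → ∀ T : Set (StrongDual ℝ X),
      sSup ((fun h : StrongDual ℝ X => h (r • w)) '' T) = r * sSup ((fun h : StrongDual ℝ X => h w) '' T) := by
    intro w r hr T
    rw [himgcomp, hsupmul r hr]
  -- homogeneity
  have hFnegimg : (fun f : StrongDual ℝ X => -f) '' F = F := by
    apply Set.Subset.antisymm
    · rintro g ⟨f, hf, rfl⟩
      exact hFneg f hf
    · intro f hf
      exact ⟨-f, hFneg f hf, neg_neg f⟩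
  have hpneg : ∀ x : X, p (-x) = p x := by
    intro x
    rw [hpdef, hpdef]
    congr 1
    ext v
    simp only [Set.mem_image]
    constructor
    · rintro ⟨f, hf, rfl⟩
      exact ⟨-f, hFneg f hf, by simp⟩
    · rintro ⟨f, hf, rfl⟩
      exact ⟨-f, hFneg f hf, by simp⟩
  have hpsmul : ∀ (r : ℝ) (x : X), p (r • x) = |r| * p x := by
    have key : ∀ (r : ℝ), 0 ≤ r → ∀ x : X, p (r • x) = r * p x := by
      intro r hr x
      rw [hpdef, hpdef, hsupsmul x r hr F]
    intro r x
    rcases le_or_gt 0 r with hr | hr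
    · rw [abs_of_nonneg hr]; exact key r hr x
    · have h1 : r • x = (-r) • (-x) := by rw [neg_smul, smul_neg, neg_neg]
      rw [h1, key (-r) (by linarith) (-x), hpneg, abs_of_neg hr]
  have hp00 : p 0 = 0 := by
    have := hpsmul 0 0
    simpa using this
  -- triangle inequality and the seminorm
  have hptri : ∀ x y : X, p (x + y) ≤ p x + p y := by
    intro x y
    apply Real.sSup_le
    · rintro v ⟨f, hf, rfl⟩
      show f (x + y) ≤ p x + p y
      rw [map_add f x y]
      exact add_le_add (hple f hf x) (hple f hf y)
    · exact add_nonneg (hp0 x) (hp0 y)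
  set ν : Seminorm ℝ X := Seminorm.of p hptri (fun r x => by
    rw [Real.norm_eq_abs]; exact hpsmul r x) with hν
  have hνp : ∀ x, ν x = p x := fun x => rfl

  -- minimal index lemma
  have hmin : ∀ (m : ℕ) (h : StrongDual ℝ X), h ∈ H m →
      ∃ k, 1 ≤ k ∧ k ≤ m ∧ h ∈ H k ∧ h ∉ H (k-1) := by
    intro m h hh
    have hex : ∃ k, h ∈ H k := ⟨m, hh⟩
    have hk := Nat.find_spec hex
    have hk1 : 1 ≤ Nat.find hex := by
      rcases Nat.eq_zero_or_pos (Nat.find hex) with h0 | h0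
      · rw [h0, hH0] at hk
        exact absurd hk (Set.notMem_empty h)
      · exact h0
    refine ⟨Nat.find hex, hk1, Nat.find_min' hex hh, hk, ?_⟩
    exact Nat.find_min hex (by omega)
  have hHle : ∀ n, 1 ≤ n → ∀ h ∈ H n, ∀ x : X, a n * |h x| ≤ p x := by
    intro n hn h hh x
    obtain ⟨k, hk1, hkn, hhk, hnhk⟩ := hmin n h hh
    have hFk := hFintro k h hhk hnhk
    have h1 : a k * h x ≤ p x := by
      have := hple _ hFk.1 x
      rwa [ContinuousLinearMap.smul_apply, smul_eq_mul] at this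
    have h2 : -(a k * h x) ≤ p x := by
      have := hple _ hFk.2 x
      rw [ContinuousLinearMap.smul_apply, ContinuousLinearMap.neg_apply, smul_eq_mul] at this
      linarith
    have h3 : a k * |h x| ≤ p x := by
      rcases abs_cases (h x) with ⟨he, _⟩ | ⟨he, _⟩
      · rw [he]; exact h1
      · rw [he, mul_neg]; exact h2
    have h4 : a n ≤ a k := hanti k n hk1 hkn
    nlinarith [abs_nonneg (h x)]
  -- absolute suprema over H n
  set sA : ℕ → X → ℝ := fun n x => sSup ((fun h : StrongDual ℝ X => |h x|) '' H n) with hsA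
  have hsAdef : ∀ n x, sA n x = sSup ((fun h : StrongDual ℝ X => |h x|) '' H n) := fun n x => rfl
  have hsAbdd : ∀ (n : ℕ) (x : X), BddAbove ((fun h : StrongDual ℝ X => |h x|) '' H n) := by
    intro n x
    exact ⟨‖x‖, by rintro v ⟨h, hh, rfl⟩; exact hnorm n h hh x⟩
  have hsA0 : ∀ n x, 0 ≤ sA n x := by
    intro n x
    rw [hsAdef]
    apply Real.sSup_nonneg
    rintro v ⟨h, hh, rfl⟩
    exact abs_nonneg _
  have hsAle : ∀ n, 1 ≤ n → ∀ x : X, a n * sA n x ≤ p x := by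
    intro n hn x
    have han := hapos n hn
    rw [hsAdef, mul_comm, ← le_div_iff₀ han]
    apply Real.sSup_le
    · rintro v ⟨h, hh, rfl⟩
      rw [le_div_iff₀ han, mul_comm]
      exact hHle n hn h hh x
    · exact div_nonneg (hp0 x) han.le
  have hsAmem : ∀ n (h : StrongDual ℝ X), h ∈ H n → ∀ x : X, |h x| ≤ sA n x := by
    intro n h hh x
    exact le_csSup (hsAbdd n x) (Set.mem_image_of_mem _ hh)
  -- relating b to the sup over the sphere
  have hbS : ∀ m, 1 ≤ m → ∀ y ∈ S m, b m ≤ sSup ((fun h : StrongDual ℝ X => h y) '' H m) := by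
    intro m hm y hy
    rw [hb m hm]
    apply csInf_le
    · refine ⟨-1, ?_⟩
      rintro v ⟨z, hz, rfl⟩
      have hz1 : ‖z‖ = 1 := by
        have := hS m hz
        rwa [Metric.mem_sphere, dist_zero_right] at this
      rcases Set.eq_empty_or_nonempty (H m) with he | ⟨h₀, hh₀⟩
      · rw [he]
        simp [Real.sSup_empty]
      · have h1 : -1 ≤ h₀ z := by
          have := hnorm m h₀ hh₀ z
          rw [hz1] at this
          linarith [abs_le.mp this]
        refine le_trans h1 (le_csSup ?_ (Set.mem_image_of_mem _ hh₀))
        refine ⟨‖z‖, ?_⟩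
        rintro v ⟨h, hh, rfl⟩
        exact le_trans (le_abs_self _) (hnorm m h hh z)
    · exact Set.mem_image_of_mem _ hy
  have hbdde : ∀ (m : ℕ) (y : X), BddAbove ((fun h : StrongDual ℝ X => h y) '' H m) := by
    intro m y
    refine ⟨‖y‖, ?_⟩
    rintro v ⟨h, hh, rfl⟩
    exact le_trans (le_abs_self _) (hnorm m h hh y)
  -- lower bound: c ‖x‖ ≤ p x
  have hplow : ∀ x : X, c * ‖x‖ ≤ p x := by
    intro x
    rcases eq_or_ne x 0 with rfl | hx0
    · rw [norm_zero, mul_zero]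
      exact hp0 0
    · have hxn : (0:ℝ) < ‖x‖ := norm_pos_iff.mpr hx0
      set y := ‖x‖⁻¹ • x with hy
      have hys : y ∈ Metric.sphere (0:X) 1 := by
        rw [Metric.mem_sphere, dist_zero_right, hy, norm_smul, norm_inv, norm_norm]
        field_simp
      rw [hcover] at hys
      obtain ⟨m, hm1, hyS⟩ := by
        simpa only [Set.mem_iUnion] using hys
      have h1 := hbS m hm1 y hyS
      have h2 : sSup ((fun h : StrongDual ℝ X => h y) '' H m) ≤ p y := by
        apply Real.sSup_le
        · rintro v ⟨h, hh, rfl⟩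
          show h y ≤ p y
          have h3 := hHle m hm1 h hh y
          have h4 : |h y| ≤ a m * |h y| := by
            nlinarith [abs_nonneg (h y), h1a m hm1]
          linarith [le_abs_self (h y)]
        · exact hp0 y
      have h5 : p y = ‖x‖⁻¹ * p x := by
        rw [hy, hpsmul, abs_of_pos (by positivity)]
      have h6 : c ≤ ‖x‖⁻¹ * p x := by
        rw [← h5]
        exact le_trans (hcb m hm1) (le_trans h1 h2)
      calc c * ‖x‖ ≤ (‖x‖⁻¹ * p x) * ‖x‖ := by nlinarith
        _ = p x := by field_simp
  -- key smallness consequence of p x = 1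
  have hNx : ∀ x : X, p x = 1 → ∃ N, 1 ≤ N ∧ 0 < ‖x‖ ∧ a N * ‖x‖ < 1 := by
    intro x hpx
    have hx0 : x ≠ 0 := by
      rintro rfl
      rw [hp00] at hpx
      norm_num at hpx
    have hxn : (0:ℝ) < ‖x‖ := norm_pos_iff.mpr hx0
    set y := ‖x‖⁻¹ • x with hy
    have hys : y ∈ Metric.sphere (0:X) 1 := by
      rw [Metric.mem_sphere, dist_zero_right, hy, norm_smul, norm_inv, norm_norm]
      field_simp
    rw [hcover] at hys
    obtain ⟨m, hm1, hyS⟩ := by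
      simpa only [Set.mem_iUnion] using hys
    have h1 := hbS m hm1 y hyS
    have h2 : sSup ((fun h : StrongDual ℝ X => h y) '' H m) ≤ ‖x‖⁻¹ * sA m x := by
      apply Real.sSup_le
      · rintro v ⟨h, hh, rfl⟩
        show h y ≤ ‖x‖⁻¹ * sA m x
        rw [hy, map_smul, smul_eq_mul]
        have h3 := hsAmem m h hh x
        have h4 : h x ≤ sA m x := le_trans (le_abs_self _) h3
        have h5 : (0:ℝ) < ‖x‖⁻¹ := by positivity
        nlinarith
      · have := hsA0 m x
        positivity
    have h6 : ‖x‖ * b m ≤ sA m x := by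
      have h7 : b m ≤ ‖x‖⁻¹ * sA m x := le_trans h1 h2
      calc ‖x‖ * b m ≤ ‖x‖ * (‖x‖⁻¹ * sA m x) := by nlinarith
        _ = sA m x := by field_simp
    have h8 : a m * b m * ‖x‖ ≤ 1 := by
      have h9 := hsAle m hm1 x
      rw [hpx] at h9
      have ham := hapos m hm1
      calc a m * b m * ‖x‖ = a m * (‖x‖ * b m) := by ring
        _ ≤ a m * sA m x := mul_le_mul_of_nonneg_left h6 ham.le
        _ ≤ 1 := h9
    obtain ⟨N, hN1, hNt⟩ := hsmall (a m * b m) (hab1 m hm1)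
    refine ⟨N, hN1, hxn, ?_⟩
    calc a N * ‖x‖ < (a m * b m) * ‖x‖ := mul_lt_mul_of_pos_right hNt hxn
      _ ≤ 1 := h8
  -- the boundary property
  have hbound : ∀ x : X, p x = 1 → ∃ f ∈ F, f x = 1 := by
    intro x hpx
    obtain ⟨N, hN1, hxn, hθ⟩ := hNx x hpx
    set θ := a N * ‖x‖ with hθdef
    have hθ0 : 0 < θ := by
      have := hapos N hN1
      positivity
    have hIcc : (Finset.Icc 1 N).Nonempty := ⟨1, Finset.mem_Icc.mpr ⟨le_rfl, hN1⟩⟩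
    set M := (Finset.Icc 1 N).sup' hIcc (fun n => a n * sA n x) with hM
    have hM1 : M ≤ 1 := by
      apply Finset.sup'_le
      intro n hn
      have := Finset.mem_Icc.mp hn
      exact le_trans (hsAle n this.1 x) hpx.le
    have hpM : p x ≤ max M θ := by
      rw [hpdef]
      apply Real.sSup_le
      · rintro v ⟨f, hf, rfl⟩
        show f x ≤ max M θ
        obtain ⟨n, h, hn1, hh, hnh, hor⟩ := hFdec f hf
        have hfabs : f x ≤ a n * |h x| := by
          have han := hapos n hn1
          rcases hor with rfl | rfl
          · rw [ContinuousLinearMap.smul_apply, smul_eq_mul]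
            exact mul_le_mul_of_nonneg_left (le_abs_self _) han.le
          · rw [ContinuousLinearMap.smul_apply, ContinuousLinearMap.neg_apply, smul_eq_mul]
            exact mul_le_mul_of_nonneg_left (neg_le_abs _) han.le
        rcases le_or_gt n N with hnN | hnN
        · refine le_trans ?_ (le_max_left M θ)
          refine le_trans ?_ (Finset.le_sup' (fun n => a n * sA n x)
            (Finset.mem_Icc.mpr ⟨hn1, hnN⟩))
          exact le_trans hfabs (mul_le_mul_of_nonneg_left (hsAmem n h hh x) (hapos n hn1).le)
        · refine le_trans ?_ (le_max_right M θ)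
          rw [hθdef]
          have h1 : a n ≤ a N := hanti N n hN1 hnN.le
          have h2 := hnorm n h hh x
          have han := hapos n hn1
          calc f x ≤ a n * |h x| := hfabs
            _ ≤ a n * ‖x‖ := mul_le_mul_of_nonneg_left h2 han.le
            _ ≤ a N * ‖x‖ := mul_le_mul_of_nonneg_right h1 (norm_nonneg x)
      · exact le_trans hθ0.le (le_max_right M θ)
    have hMeq : M = 1 := by
      rw [hpx] at hpM
      rcases max_cases M θ with ⟨h1, _⟩ | ⟨h1, h2⟩
      · rw [h1] at hpM
        linarith
      · rw [h1] at hpM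
        linarith
    obtain ⟨n₀, hn₀mem, hMn₀⟩ := Finset.exists_mem_eq_sup' hIcc (fun n => a n * sA n x)
    obtain ⟨h1n₀, hn₀N⟩ := Finset.mem_Icc.mp hn₀mem
    have han₀ : 0 < a n₀ := hapos n₀ h1n₀
    have hsn₀ : sA n₀ x = (a n₀)⁻¹ := by
      have h1 : a n₀ * sA n₀ x = 1 := by rw [← hMn₀, ← hM, hMeq]
      field_simp
      linarith [h1]
    have hinvpos : (0:ℝ) < (a n₀)⁻¹ := by positivity
    have hHne : (H n₀).Nonempty := by
      rcases Set.eq_empty_or_nonempty (H n₀) with he | hne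
      · exfalso
        rw [hsAdef, he] at hsn₀
        simp only [Set.image_empty, Real.sSup_empty] at hsn₀
        linarith
      · exact hne
    -- the inner attainment lemma
    have key : ∀ w : X, p w = 1 →
        sSup ((fun h : StrongDual ℝ X => h w) '' H n₀) = (a n₀)⁻¹ → ∃ f ∈ F, f w = 1 := by
      intro w hpw hsup
      have himg : sSup ((fun h : StrongDual ℝ X => h (a n₀ • w)) '' H n₀) = 1 := by
        rw [hsupsmul w (a n₀) han₀.le, hsup, mul_inv_cancel₀ han₀.ne']
      obtain ⟨h, hhH, hh1⟩ := hrel n₀ _ himg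
      have hhw : h w = (a n₀)⁻¹ := by
        have h2 : a n₀ * h w = 1 := by
          have := hh1
          rwa [map_smul, smul_eq_mul] at this
        field_simp
        linarith
      have hnot : h ∉ H (n₀ - 1) := by
        intro hmem
        rcases Nat.eq_zero_or_pos (n₀ - 1) with h0 | hq1
        · rw [h0, hH0] at hmem
          exact hmem
        · have hqlt : n₀ - 1 < n₀ := by omega
          have hq : (a n₀)⁻¹ ≤ sA (n₀-1) w := by
            refine le_trans ?_ (hsAmem (n₀-1) h hmem w)
            rw [hhw, abs_of_pos hinvpos]
          have h2 : a (n₀-1) * sA (n₀-1) w ≤ 1 := by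
            have := hsAle (n₀-1) hq1 w
            rwa [hpw] at this
          have h3 : a n₀ < a (n₀-1) := hstrict (n₀-1) n₀ hq1 hqlt
          have h4 : a (n₀-1) * (a n₀)⁻¹ ≤ a (n₀-1) * sA (n₀-1) w := by
            apply mul_le_mul_of_nonneg_left hq
            linarith [hapos (n₀-1) hq1]
          have h5 : 1 < a (n₀-1) * (a n₀)⁻¹ := by
            have h6 : a n₀ * (a n₀)⁻¹ = 1 := mul_inv_cancel₀ han₀.ne'
            have h7 := mul_lt_mul_of_pos_right h3 hinvpos
            linarith
          linarith
      refine ⟨a n₀ • h, (hFintro n₀ h hhH hnot).1, ?_⟩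
      rw [ContinuousLinearMap.smul_apply, smul_eq_mul, hhw, mul_inv_cancel₀ han₀.ne']
    -- split according to which sign attains
    set Sp := sSup ((fun h : StrongDual ℝ X => h x) '' H n₀) with hSp
    set Sm := sSup ((fun h : StrongDual ℝ X => h (-x)) '' H n₀) with hSm
    have hSple : Sp ≤ sA n₀ x := by
      rw [hSp, hsAdef]
      apply Real.sSup_le
      · rintro v ⟨h, hh, rfl⟩
        exact le_trans (le_abs_self _) (le_csSup (hsAbdd n₀ x) (Set.mem_image_of_mem _ hh))
      · exact hsA0 n₀ x
    have hSmle : Sm ≤ sA n₀ x := by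
      rw [hSm, hsAdef]
      apply Real.sSup_le
      · rintro v ⟨h, hh, rfl⟩
        show h (-x) ≤ sSup ((fun h : StrongDual ℝ X => |h x|) '' H n₀)
        have : h (-x) ≤ |h x| := by
          rw [map_neg]
          exact le_trans (le_abs_self _) (by rw [abs_neg])
        exact le_trans this (le_csSup (hsAbdd n₀ x) (Set.mem_image_of_mem _ hh))
      · exact hsA0 n₀ x
    have hmaxge : sA n₀ x ≤ max Sp Sm := by
      obtain ⟨h₀, hh₀⟩ := hHne
      have hmax0 : 0 ≤ max Sp Sm := by
        have h1 : h₀ x ≤ Sp := le_csSup (hbdde n₀ x) (Set.mem_image_of_mem _ hh₀)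
        have h2 : -(h₀ x) ≤ Sm := by
          refine le_trans ?_ (le_csSup (hbdde n₀ (-x)) (Set.mem_image_of_mem _ hh₀))
          rw [map_neg]
        rcases le_or_gt 0 (h₀ x) with h | h
        · exact le_trans h (le_trans h1 (le_max_left _ _))
        · refine le_trans ?_ (le_trans h2 (le_max_right _ _))
          linarith
      rw [hsAdef]
      apply Real.sSup_le
      · rintro v ⟨h, hh, rfl⟩
        show |h x| ≤ max Sp Sm
        rcases abs_cases (h x) with ⟨he, _⟩ | ⟨he, _⟩
        · rw [he]
          exact le_trans (le_csSup (hbdde n₀ x) (Set.mem_image_of_mem _ hh)) (le_max_left _ _)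
        · rw [he]
          refine le_trans ?_ (le_max_right _ _)
          refine le_trans ?_ (le_csSup (hbdde n₀ (-x)) (Set.mem_image_of_mem _ hh))
          rw [map_neg]
      · exact hmax0
    have hmaxeq : max Sp Sm = sA n₀ x := le_antisymm (max_le hSple hSmle) hmaxge
    rcases max_choice Sp Sm with hch | hch
    · -- positive side attains
      have : Sp = (a n₀)⁻¹ := by rw [← hsn₀, ← hmaxeq, hch]
      exact key x hpx (by rw [← hSp]; exact this)
    · -- negative side attains
      have hSm1 : Sm = (a n₀)⁻¹ := by rw [← hsn₀, ← hmaxeq, hch]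
      have hpnx : p (-x) = 1 := by rw [hpneg]; exact hpx
      have hsnx : sA n₀ (-x) = sA n₀ x := by
        rw [hsAdef, hsAdef]
        congr 1
        apply Set.image_congr'
        intro h
        rw [map_neg, abs_neg]
      obtain ⟨f, hfF, hf1⟩ := key (-x) hpnx (by rw [← hSm]; exact hSm1)
      refine ⟨-f, hFneg f hfF, ?_⟩
      rw [ContinuousLinearMap.neg_apply, ← map_neg, hf1]

  -- generic upper bound from decomposition
  have hfabs2 : ∀ (n : ℕ) (h f : StrongDual ℝ X), 1 ≤ n → (f = a n • h ∨ f = a n • (-h)) →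
      ∀ z : X, f z ≤ a n * |h z| := by
    intro n h f hn1 hor z
    have han := hapos n hn1
    rcases hor with rfl | rfl
    · rw [ContinuousLinearMap.smul_apply, smul_eq_mul]
      exact mul_le_mul_of_nonneg_left (le_abs_self _) han.le
    · rw [ContinuousLinearMap.smul_apply, ContinuousLinearMap.neg_apply, smul_eq_mul]
      exact mul_le_mul_of_nonneg_left (neg_le_abs _) han.le
  -- continuity of scalar multiplication on the weak dual
  have hsmulcont : ∀ r : ℝ, Continuous (fun φ : WeakDual ℝ X => r • φ) := by
    intro r
    apply WeakBilin.continuous_of_continuous_eval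
    intro y
    have h1 : Continuous fun φ : WeakDual ℝ X => φ y := WeakDual.eval_continuous y
    have h2 : (fun φ : WeakDual ℝ X => (topDualPairing ℝ X (r • φ)) y) =
        fun φ : WeakDual ℝ X => r * φ y := by
      funext φ; rfl
    rw [h2]
    exact continuous_const.mul h1
  -- accumulation points in compact subsets of the weak dual
  have haccum : ∀ (K T : Set (WeakDual ℝ X)), IsCompact K → T ⊆ K → T.Infinite →
      ∃ g ∈ K, ∀ U : Set (WeakDual ℝ X), IsOpen U → g ∈ U → (T ∩ U).Infinite := by
    intro K T hK hT hinf
    by_contra hno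
    push_neg at hno
    have hch : ∀ g ∈ K, ∃ U : Set (WeakDual ℝ X), IsOpen U ∧ g ∈ U ∧ (T ∩ U).Finite := by
      intro g hg
      obtain ⟨U, hUo, hgU, hfin⟩ := hno g hg
      exact ⟨U, hUo, hgU, hfin⟩
    choose U hUo hgU hfin using hch
    obtain ⟨t, hcov⟩ := hK.elim_nhds_subcover' (fun g hg => U g hg)
      (fun g hg => (hUo g hg).mem_nhds (hgU g hg))
    apply hinf
    have hsub : T ⊆ ⋃ (g : K) (_ : g ∈ t), U g.1 g.2 := fun z hz => hcov (hT hz)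
    have hfin2 : (⋃ (g : K) (_ : g ∈ t), (T ∩ U g.1 g.2)).Finite :=
      Set.Finite.biUnion t.finite_toSet (fun g _ => hfin g.1 g.2)
    apply hfin2.subset
    intro z hz
    have h2 := hsub hz
    simp only [Set.mem_iUnion] at h2 ⊢
    obtain ⟨g, hgt, hzU⟩ := h2
    exact ⟨g, hgt, hz, hzU⟩
  -- property (*) transfers to F
  have hstarF : (∀ n, PropertyStar (H n)) → PropertyStar F := by
    intro hstar g hg x hx
    have hpx : p x = 1 := by rw [hpdef]; exact hx
    by_contra hge
    push_neg at hge
    obtain ⟨N, hN1, hxn, hθ⟩ := hNx x hpx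
    have hexists : ∃ (n₀ : ℕ) (σ : ℝ), 1 ≤ n₀ ∧ n₀ ≤ N ∧ (σ = (1:ℝ) ∨ σ = -1) ∧
        ∀ U : Set (WeakDual ℝ X), IsOpen U → StrongDual.toWeakDual g ∈ U →
          {f : StrongDual ℝ X | (∃ h, (h ∈ H n₀ ∧ h ∉ H (n₀-1)) ∧ f = (σ * a n₀) • h) ∧
            StrongDual.toWeakDual f ∈ U}.Infinite := by
      by_contra hno
      push_neg at hno
      have hU : ∀ (n₀ : ℕ) (σ : ℝ), ∃ U : Set (WeakDual ℝ X), IsOpen U ∧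
          StrongDual.toWeakDual g ∈ U ∧
          (1 ≤ n₀ → n₀ ≤ N → (σ = 1 ∨ σ = -1) →
            {f : StrongDual ℝ X | (∃ h, (h ∈ H n₀ ∧ h ∉ H (n₀-1)) ∧ f = (σ * a n₀) • h) ∧
              StrongDual.toWeakDual f ∈ U}.Finite) := by
        intro n₀ σ
        by_cases hcase : 1 ≤ n₀ ∧ n₀ ≤ N ∧ (σ = 1 ∨ σ = -1)
        · obtain ⟨U, hUo, hgU, hfin⟩ := hno n₀ σ hcase.1 hcase.2.1 hcase.2.2
          exact ⟨U, hUo, hgU, fun _ _ _ => hfin⟩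
        · exact ⟨Set.univ, isOpen_univ, Set.mem_univ _,
            fun h1 h2 h3 => absurd ⟨h1, h2, h3⟩ hcase⟩
      choose U hUo hgU hUfin using hU
      set V : Set (WeakDual ℝ X) :=
        (⋂ n ∈ Finset.Icc 1 N, (U n 1 ∩ U n (-1))) ∩
          {φ : WeakDual ℝ X | a N * ‖x‖ < φ x} with hV
      have hVo : IsOpen V := by
        apply IsOpen.inter
        · exact Set.Finite.isOpen_biInter (Finset.Icc 1 N).finite_toSet
            (fun n _ => (hUo n 1).inter (hUo n (-1)))
        · exact isOpen_lt continuous_const (WeakDual.eval_continuous x)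
      have hgV : StrongDual.toWeakDual g ∈ V := by
        constructor
        · exact Set.mem_iInter₂.mpr (fun n _ => ⟨hgU n 1, hgU n (-1)⟩)
        · show a N * ‖x‖ < (StrongDual.toWeakDual g) x
          have h0 : (StrongDual.toWeakDual g) x = g x := rfl
          rw [h0]; linarith
      have hinf := hg V hVo hgV
      apply hinf
      apply Set.Finite.subset (Set.Finite.biUnion (Finset.Icc 1 N).finite_toSet
        (fun n (hn : n ∈ Finset.Icc 1 N) =>
          Set.Finite.union
            (hUfin n 1 (Finset.mem_Icc.mp hn).1 (Finset.mem_Icc.mp hn).2 (Or.inl rfl))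
            (hUfin n (-1) (Finset.mem_Icc.mp hn).1 (Finset.mem_Icc.mp hn).2 (Or.inr rfl))))
      rintro f ⟨hfF, hfV⟩
      obtain ⟨n, h, hn1, hh, hnh, hor⟩ := hFdec f hfF
      have hfx : a N * ‖x‖ < f x := hfV.2
      have hnN : n ≤ N := by
        by_contra hgt
        push_neg at hgt
        have h1 : f x ≤ a n * |h x| := hfabs2 n h f hn1 hor x
        have h2 : a n * |h x| ≤ a n * ‖x‖ :=
          mul_le_mul_of_nonneg_left (hnorm n h hh x) (hapos n hn1).le
        have h3 : a n * ‖x‖ ≤ a N * ‖x‖ :=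
          mul_le_mul_of_nonneg_right (hanti N n hN1 hgt.le) (norm_nonneg x)
        linarith
      have hmemIcc : n ∈ Finset.Icc 1 N := Finset.mem_Icc.mpr ⟨hn1, hnN⟩
      have hfU : StrongDual.toWeakDual f ∈ U n 1 ∩ U n (-1) :=
        Set.mem_iInter₂.mp hfV.1 n hmemIcc
      apply Set.mem_biUnion (by exact_mod_cast hmemIcc)
      rcases hor with rfl | rfl
      · left
        exact ⟨⟨h, ⟨hh, hnh⟩, by rw [one_mul]⟩, hfU.1⟩
      · right
        refine ⟨⟨h, ⟨hh, hnh⟩, ?_⟩, hfU.2⟩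
        rw [smul_neg, neg_one_mul]; ext y; simp
    obtain ⟨n₀, σ, hn₀1, hn₀N, hσ, hLP⟩ := hexists
    have han₀ := hapos n₀ hn₀1
    have hσ2 : σ * σ = 1 := by rcases hσ with rfl | rfl <;> norm_num
    set x' := (σ * a n₀) • x with hx'
    have hub : ∀ h ∈ H n₀, h x' ≤ 1 := by
      intro h hh
      have h1 : a n₀ * sA n₀ x ≤ 1 := by rw [← hpx]; exact hsAle n₀ hn₀1 x
      have h2 : |h x| ≤ sA n₀ x := hsAmem n₀ h hh x
      have h3 : h x' = (σ * a n₀) * h x := by rw [hx', map_smul, smul_eq_mul]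
      have h4 : (σ * a n₀) * h x ≤ a n₀ * |h x| := by
        rcases hσ with rfl | rfl
        · rw [one_mul]; exact mul_le_mul_of_nonneg_left (le_abs_self _) han₀.le
        · rw [neg_one_mul, neg_mul, ← mul_neg]
          exact mul_le_mul_of_nonneg_left (neg_le_abs _) han₀.le
      have h5 : a n₀ * |h x| ≤ 1 := le_trans (mul_le_mul_of_nonneg_left h2 han₀.le) h1
      rw [h3]
      linarith
    have hlow : sSup ((fun h : StrongDual ℝ X => h x') '' H n₀) = 1 := by
      apply le_antisymm
      · apply Real.sSup_le
        · rintro v ⟨h, hh, rfl⟩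
          exact hub h hh
        · exact zero_le_one
      · by_contra hlt
        push_neg at hlt
        set W : Set (WeakDual ℝ X) :=
          {φ : WeakDual ℝ X | sSup ((fun h : StrongDual ℝ X => h x') '' H n₀) < φ x} with hW
        have hWo : IsOpen W := isOpen_lt continuous_const (WeakDual.eval_continuous x)
        have hgW : StrongDual.toWeakDual g ∈ W := by
          show sSup ((fun h : StrongDual ℝ X => h x') '' H n₀) < (StrongDual.toWeakDual g) x
          have h0 : (StrongDual.toWeakDual g) x = g x := rfl
          rw [h0]; linarith
        obtain ⟨f, ⟨⟨h, hhΔ, rfl⟩, hfW⟩⟩ := (hLP W hWo hgW).nonempty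
        have hfeq : ((σ * a n₀) • h) x = h x' := by
          rw [ContinuousLinearMap.smul_apply, smul_eq_mul, hx', map_smul, smul_eq_mul]
        have h1 : h x' ≤ sSup ((fun h : StrongDual ℝ X => h x') '' H n₀) :=
          le_csSup (hbdde n₀ x') (Set.mem_image_of_mem _ hhΔ.1)
        have h2 : sSup ((fun h : StrongDual ℝ X => h x') '' H n₀) < ((σ * a n₀) • h) x := hfW
        rw [hfeq] at h2
        linarith
    set g' := (σ * (a n₀)⁻¹) • g with hg'
    have hcoef : (σ * (a n₀)⁻¹) * (σ * a n₀) = 1 := by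
      rw [mul_mul_mul_comm, hσ2, inv_mul_cancel₀ han₀.ne', one_mul]
    have hg'lim : IsWeakStarLimitPoint (H n₀) g' := by
      intro W hWo hgW'
      have hcont := hsmulcont (σ * (a n₀)⁻¹)
      have hVo : IsOpen ((fun φ : WeakDual ℝ X => (σ * (a n₀)⁻¹) • φ) ⁻¹' W) :=
        hWo.preimage hcont
      have hgV : StrongDual.toWeakDual g ∈ (fun φ : WeakDual ℝ X => (σ * (a n₀)⁻¹) • φ) ⁻¹' W := by
        show (σ * (a n₀)⁻¹) • StrongDual.toWeakDual g ∈ W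
        rw [← map_smul]
        exact hgW'
      have hinf := hLP _ hVo hgV
      have hne : σ * (a n₀)⁻¹ ≠ 0 := by
        rcases hσ with rfl | rfl <;> simp [han₀.ne']
      have hinj : Function.Injective (fun f : StrongDual ℝ X => (σ * (a n₀)⁻¹) • f) :=
        fun f1 f2 hf => smul_right_injective _ hne hf
      have himg := hinf.image hinj.injOn
      apply himg.mono
      rintro f' ⟨f, ⟨⟨h, hhΔ, rfl⟩, hfV⟩, rfl⟩
      constructor
      · have hid : (σ * (a n₀)⁻¹) • ((σ * a n₀) • h) = h := by
          rw [smul_smul, hcoef, one_smul]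
        show (σ * (a n₀)⁻¹) • ((σ * a n₀) • h) ∈ H n₀
        rw [hid]
        exact hhΔ.1
      · show StrongDual.toWeakDual ((σ * (a n₀)⁻¹) • ((σ * a n₀) • h)) ∈ W
        rw [map_smul]
        exact hfV
    have hfin := hstar n₀ g' hg'lim x' hlow
    have heq : g' x' = g x := by
      rw [hg', hx', ContinuousLinearMap.smul_apply, smul_eq_mul, map_smul, smul_eq_mul,
        ← mul_assoc, hcoef, one_mul]
    rw [heq] at hfin
    linarith

  -- polyhedrality
  have hpoly : (∀ n, PropertyStar (H n)) → ∀ Y : Subspace ℝ X, FiniteDimensional ℝ Y →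
      ∃ T : Set X, T.Finite ∧ {x : X | x ∈ Y ∧ p x ≤ 1} = convexHull ℝ T := by
    intro hstar Y hYfd
    haveI := hYfd
    have hPS := hstarF hstar
    -- continuity of p
    have hlip : ∀ x z : X, |p x - p z| ≤ A * ‖x - z‖ := by
      intro x z
      rw [abs_sub_le_iff]
      constructor
      · have h1 := hptri (x - z) z
        rw [sub_add_cancel] at h1
        have h2 := hpub (x - z)
        linarith
      · have h1 := hptri (z - x) x
        rw [sub_add_cancel] at h1
        have h2 := hpub (z - x)
        rw [norm_sub_rev] at h2
        linarith
    have hpc : Continuous p := by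
      have : LipschitzWith ⟨A, hA0.le⟩ p := by
        apply LipschitzWith.of_dist_le_mul
        intro x z
        rw [Real.dist_eq, dist_eq_norm]
        exact hlip x z
      exact this.continuous
    have hYclosed : IsClosed (Y : Set X) := Y.closed_of_finiteDimensional
    set B : Set X := {x : X | x ∈ Y ∧ p x ≤ 1} with hB
    have hBsubY : B ⊆ (Y : Set X) := fun x hx => hx.1
    have hBeq : B = (Y : Set X) ∩ p ⁻¹' (Set.Iic 1) := by
      ext u
      constructor
      · rintro ⟨h1, h2⟩; exact ⟨h1, h2⟩
      · rintro ⟨h1, h2⟩; exact ⟨h1, h2⟩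
    have hBclosed : IsClosed B := by
      rw [hBeq]
      exact hYclosed.inter (isClosed_Iic.preimage hpc)
    have hBcpt : IsCompact B := by
      have h1 : B = (Subtype.val : Y → X) '' (Subtype.val ⁻¹' B) := by
        rw [Set.image_preimage_eq_inter_range, Subtype.range_coe]
        exact (Set.inter_eq_left.mpr hBsubY).symm
      rw [h1]
      apply IsCompact.image ?_ continuous_subtype_val
      apply Metric.isCompact_of_isClosed_isBounded
      · exact hBclosed.preimage continuous_subtype_val
      · apply Bornology.IsBounded.subset (Metric.isBounded_closedBall (x := (0:Y)) (r := c⁻¹))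
        intro y hy
        have h2 : c * ‖(y : X)‖ ≤ p (y : X) := hplow (y : X)
        have h3 : p (y : X) ≤ 1 := hy.2
        have h4 : ‖(y : X)‖ ≤ c⁻¹ := by
          rw [show (c⁻¹ : ℝ) = 1/c by rw [one_div], le_div_iff₀ hcpos]
          nlinarith
        have h5 : y ∈ Metric.closedBall (0:Y) c⁻¹ := by
          rw [Metric.mem_closedBall, dist_zero_right]
          exact h4
        exact h5
    have hBconv : Convex ℝ B := by
      intro u hu v hv s t hs ht hst
      obtain ⟨hu1, hu2⟩ := hu
      obtain ⟨hv1, hv2⟩ := hv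
      constructor
      · exact Y.add_mem (Y.smul_mem s hu1) (Y.smul_mem t hv1)
      · calc p (s • u + t • v) ≤ p (s • u) + p (t • v) := hptri _ _
          _ = |s| * p u + |t| * p v := by rw [hpsmul, hpsmul]
          _ = s * p u + t * p v := by rw [abs_of_nonneg hs, abs_of_nonneg ht]
          _ ≤ s * 1 + t * 1 := add_le_add (mul_le_mul_of_nonneg_left hu2 hs)
              (mul_le_mul_of_nonneg_left hv2 ht)
          _ = 1 := by rw [mul_one, mul_one, hst]
    -- the p-sphere in Y
    set SY : Set X := {z : X | z ∈ Y ∧ p z = 1} with hSY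
    have hSYsub : SY ⊆ B := fun z hz => ⟨hz.1, hz.2.le⟩
    have hSYclosed : IsClosed SY := by
      have h1 : SY = (Y : Set X) ∩ p ⁻¹' {1} := by
        ext u
        constructor
        · rintro ⟨h1, h2⟩; exact ⟨h1, h2⟩
        · rintro ⟨h1, h2⟩; exact ⟨h1, h2⟩
      rw [h1]
      exact hYclosed.inter (isClosed_singleton.preimage hpc)
    have hSYcpt : IsCompact SY := hBcpt.of_isClosed_subset hSYclosed hSYsub
    -- finitely many functionals suffice on SY
    obtain ⟨G, hGF, hGatt⟩ : ∃ G : Finset (StrongDual ℝ X), (↑G : Set (StrongDual ℝ X)) ⊆ F ∧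
        ∀ z ∈ SY, ∃ f ∈ G, f z = 1 := by
      set E : Set (StrongDual ℝ X) := {f : StrongDual ℝ X | f ∈ F ∧ ∃ z ∈ SY, f z = 1} with hE
      set ρ : StrongDual ℝ X → (Y → ℝ) := fun f => (fun y => f (y : X)) with hρ
      have hfinρ : (ρ '' E).Finite := by
        by_contra hinf
        have hinf' : (ρ '' E).Infinite := hinf
        set emb := Set.Infinite.natEmbedding _ hinf' with hembdef
        have hch : ∀ k : ℕ, ∃ f : StrongDual ℝ X, f ∈ E ∧ ρ f = ((emb k : ↑(ρ '' E)) : Y → ℝ) := by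
          intro k
          obtain ⟨f, hf1, hf2⟩ := (emb k).2
          exact ⟨f, hf1, hf2⟩
        choose f hfE hfρ using hch
        have hfinj : Function.Injective f := by
          intro k l h
          have h2 : emb k = emb l := by
            apply Subtype.ext
            rw [← hfρ, ← hfρ, h]
          exact emb.injective h2
        have hzch : ∀ k, ∃ z, z ∈ SY ∧ f k z = 1 := fun k => (hfE k).2
        choose z hzSY hz1 using hzch
        obtain ⟨z', hz'SY, φ, hφmono, hφtend⟩ := hSYcpt.tendsto_subseq hzSY
        have hKcpt := WeakDual.isCompact_closedBall (0 : StrongDual ℝ X) A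
        set T : Set (WeakDual ℝ X) := Set.range (fun k => StrongDual.toWeakDual (f (φ k))) with hT
        have hTsub : T ⊆ ⇑WeakDual.toStrongDual ⁻¹' Metric.closedBall 0 A := by
          rintro w ⟨k, rfl⟩
          show WeakDual.toStrongDual (StrongDual.toWeakDual (f (φ k))) ∈ Metric.closedBall 0 A
          rw [Metric.mem_closedBall, dist_zero_right]
          exact hFnorm _ (hfE (φ k)).1
        have hTinf : T.Infinite := Set.infinite_range_of_injective
          (fun k l h => hφmono.injective (hfinj (StrongDual.toWeakDual.injective h)))
        obtain ⟨gw, hgwK, hacc⟩ := haccum _ T hKcpt hTsub hTinf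
        set g : StrongDual ℝ X := StrongDual.toWeakDual.symm gw with hgdef
        have hgw : StrongDual.toWeakDual g = gw := StrongDual.toWeakDual.apply_symm_apply gw
        have hglim : IsWeakStarLimitPoint F g := by
          intro U hUo hgU
          rw [hgw] at hgU
          have h2 := hacc U hUo hgU
          have himg := h2.image ((StrongDual.toWeakDual (𝕜 := ℝ) (E := X)).symm.injective.injOn)
          apply himg.mono
          rintro f' ⟨w, ⟨hwT, hwU⟩, rfl⟩
          obtain ⟨k, rfl⟩ := hwT
          constructor
          · show StrongDual.toWeakDual.symm (StrongDual.toWeakDual (f (φ k))) ∈ F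
            rw [LinearEquiv.symm_apply_apply]
            exact (hfE (φ k)).1
          · show StrongDual.toWeakDual (StrongDual.toWeakDual.symm (StrongDual.toWeakDual (f (φ k)))) ∈ U
            rw [LinearEquiv.apply_symm_apply]
            exact hwU
        have hgz : g z' < 1 := by
          apply hPS g hglim z'
          have h3 := hz'SY.2
          rw [hpdef] at h3
          exact h3
        set δ := 1 - g z' with hδdef
        have hδ : 0 < δ := by rw [hδdef]; linarith
        set Uδ : Set (WeakDual ℝ X) := {ψ : WeakDual ℝ X | ψ z' < g z' + δ/2} with hUδ
        have hUδo : IsOpen Uδ := isOpen_lt (WeakDual.eval_continuous z') continuous_const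
        have hgUδ : gw ∈ Uδ := by
          rw [← hgw]
          show g z' < g z' + δ/2
          linarith
        have hidx : {k : ℕ | StrongDual.toWeakDual (f (φ k)) ∈ Uδ}.Infinite := by
          by_contra hfin
          rw [Set.not_infinite] at hfin
          apply hacc Uδ hUδo hgUδ
          apply Set.Finite.subset (hfin.image (fun k => StrongDual.toWeakDual (f (φ k))))
          rintro w ⟨⟨k, rfl⟩, hw⟩
          exact Set.mem_image_of_mem _ hw
        obtain ⟨K₀, hK₀⟩ := Metric.tendsto_atTop.mp hφtend (δ/(2*A)) (by positivity)
        obtain ⟨k, hkidx, hknotin⟩ := hidx.exists_notMem_finset (Finset.range (K₀+1))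
        have hkK₀ : K₀ ≤ k := by
          by_contra hlt
          exact hknotin (Finset.mem_range.mpr (by omega))
        have h1 : f (φ k) z' < g z' + δ/2 := hkidx
        have h2 : f (φ k) (z (φ k)) = 1 := hz1 (φ k)
        have h3 : ‖z (φ k) - z'‖ < δ/(2*A) := by
          have := hK₀ k hkK₀
          rwa [Function.comp_apply, dist_eq_norm] at this
        have h4 : |f (φ k) (z (φ k)) - f (φ k) z'| ≤ A * ‖z (φ k) - z'‖ := by
          rw [← map_sub]
          calc |f (φ k) (z (φ k) - z')| = ‖f (φ k) (z (φ k) - z')‖ := (Real.norm_eq_abs _).symm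
            _ ≤ ‖f (φ k)‖ * ‖z (φ k) - z'‖ := ContinuousLinearMap.le_opNorm _ _
            _ ≤ A * ‖z (φ k) - z'‖ :=
                mul_le_mul_of_nonneg_right (hFnorm _ (hfE (φ k)).1) (norm_nonneg _)
        have h5 : A * ‖z (φ k) - z'‖ < δ/2 := by
          have h6 : A * (δ/(2*A)) = δ/2 := by field_simp
          have h7 := mul_lt_mul_of_pos_left h3 hA0
          linarith
        have h8 := abs_le.mp h4
        linarith [h8.1, h8.2]
      -- choose representatives
      have hG0 : ∃ G0 : Finset (Y → ℝ), (↑G0 : Set (Y → ℝ)) = ρ '' E :=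
        ⟨hfinρ.toFinset, Set.Finite.coe_toFinset _⟩
      obtain ⟨G0, hG0⟩ := hG0
      have hrepex : ∀ w : Y → ℝ, w ∈ G0 → ∃ fw : StrongDual ℝ X, fw ∈ E ∧ ρ fw = w := by
        intro w hw
        have h1 : w ∈ ρ '' E := by rw [← hG0]; exact hw
        obtain ⟨fw, h2, h3⟩ := h1
        exact ⟨fw, h2, h3⟩
      choose rep hrepE hrepρ using hrepex
      refine ⟨G0.attach.image (fun w => rep w.1 w.2), ?_, ?_⟩
      · intro f hf
        rw [Finset.coe_image] at hf
        obtain ⟨w, _, rfl⟩ := hf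
        exact (hrepE w.1 w.2).1
      · intro u hu
        obtain ⟨f0, hf0F, hf01⟩ := hbound u hu.2
        have hf0E : f0 ∈ E := ⟨hf0F, u, hu, hf01⟩
        have hwG0 : ρ f0 ∈ G0 := by
          rw [← Finset.mem_coe, hG0]
          exact Set.mem_image_of_mem _ hf0E
        refine ⟨rep (ρ f0) hwG0, Finset.mem_image.mpr ⟨⟨ρ f0, hwG0⟩, Finset.mem_attach _ _, rfl⟩, ?_⟩
        have h1 := congrFun (hrepρ (ρ f0) hwG0) ⟨u, hu.1⟩
        have h2 : rep (ρ f0) hwG0 u = f0 u := h1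
        rw [h2, hf01]
    -- polyhedron representation
    have hBrep : B = {x : X | x ∈ Y ∧ ∀ f ∈ G, f x ≤ 1} := by
      ext u
      constructor
      · rintro ⟨hu1, hu2⟩
        exact ⟨hu1, fun f hf => le_trans (hple f (hGF hf) u) hu2⟩
      · rintro ⟨hu1, hu2⟩
        refine ⟨hu1, ?_⟩
        by_contra hpu
        push_neg at hpu
        have hpu0 : 0 < p u := lt_trans one_pos hpu
        have hzY : (p u)⁻¹ • u ∈ Y := Y.smul_mem _ hu1
        have hpz : p ((p u)⁻¹ • u) = 1 := by
          rw [hpsmul, abs_of_pos (inv_pos.mpr hpu0), inv_mul_cancel₀ hpu0.ne']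
        obtain ⟨f, hfG, hfz⟩ := hGatt _ ⟨hzY, hpz⟩
        have h1 : f ((p u)⁻¹ • u) = (p u)⁻¹ * f u := by rw [map_smul, smul_eq_mul]
        rw [h1] at hfz
        have h2 : f u = p u := by
          field_simp at hfz
          linarith
        have h3 := hu2 f hfG
        linarith
    -- finiteness of extreme points
    have hext : (extremePoints ℝ B).Finite := by
      have hinj : Set.InjOn (fun e => {f : StrongDual ℝ X | f ∈ (↑G : Set (StrongDual ℝ X)) ∧ f e = 1})
          (extremePoints ℝ B) := by
        intro e he e' he' hEq
        by_contra hne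
        have heB : e ∈ B := (mem_extremePoints.mp he).1
        have he'B : e' ∈ B := (mem_extremePoints.mp he').1
        have hv0 : e' - e ≠ 0 := sub_ne_zero.mpr (Ne.symm hne)
        have hzero : ∀ f ∈ G, f e = 1 → f (e' - e) = 0 := by
          intro f hf hfe
          have hEq' : {f : StrongDual ℝ X | f ∈ (↑G : Set (StrongDual ℝ X)) ∧ f e = 1} =
              {f : StrongDual ℝ X | f ∈ (↑G : Set (StrongDual ℝ X)) ∧ f e' = 1} := hEq
          have h1 : f ∈ {f : StrongDual ℝ X | f ∈ (↑G : Set (StrongDual ℝ X)) ∧ f e' = 1} := by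
            rw [← hEq']
            exact ⟨hf, hfe⟩
          have hfe' : f e' = 1 := h1.2
          rw [map_sub, hfe, hfe', sub_self]
        have hfe_le : ∀ f ∈ G, f e ≤ 1 := by
          have h1 : e ∈ {x : X | x ∈ Y ∧ ∀ f ∈ G, f x ≤ 1} := by rw [← hBrep]; exact heB
          exact h1.2
        set Gf := G.filter (fun f => f e < 1) with hGf
        have htne : (insert (1:ℝ) (Gf.image (fun f => (1 - f e)/(|f (e' - e)| + 1)))).Nonempty :=
          Finset.insert_nonempty _ _
        set t : ℝ := (insert (1:ℝ) (Gf.image (fun f => (1 - f e)/(|f (e' - e)| + 1)))).min' htne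
          with htdef
        have ht0 : 0 < t := by
          have hmem := Finset.min'_mem _ htne
          rw [← htdef] at hmem
          rcases Finset.mem_insert.mp hmem with h | h
          · rw [h]; norm_num
          · obtain ⟨f, hfGf, hft⟩ := Finset.mem_image.mp h
            have hflt : f e < 1 := (Finset.mem_filter.mp hfGf).2
            rw [← hft]
            apply div_pos (by linarith) (by positivity)
        have htle : ∀ f ∈ Gf, t ≤ (1 - f e)/(|f (e' - e)| + 1) := by
          intro f hf
          exact Finset.min'_le _ _ (Finset.mem_insert_of_mem (Finset.mem_image_of_mem _ hf))
        have hmem : ∀ s : ℝ, |s| ≤ t → e + s • (e' - e) ∈ B := by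
          intro s hs
          rw [hBrep]
          refine ⟨Y.add_mem heB.1 (Y.smul_mem _ (Y.sub_mem he'B.1 heB.1)), ?_⟩
          intro f hf
          rw [map_add, map_smul, smul_eq_mul]
          rcases eq_or_lt_of_le (hfe_le f hf) with heq1 | hlt1
          · rw [hzero f hf heq1, mul_zero, add_zero, heq1]
          · have hfGf : f ∈ Gf := Finset.mem_filter.mpr ⟨hf, hlt1⟩
            have h6 := htle f hfGf
            have hd0 : (0:ℝ) ≤ |f (e' - e)| := abs_nonneg _
            have h7 : t * (|f (e' - e)| + 1) ≤ 1 - f e := by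
              rw [← le_div_iff₀ (by positivity)]
              exact h6
            have h8 : s * f (e' - e) ≤ t * |f (e' - e)| := by
              calc s * f (e' - e) ≤ |s * f (e' - e)| := le_abs_self _
                _ = |s| * |f (e' - e)| := abs_mul _ _
                _ ≤ t * |f (e' - e)| := mul_le_mul_of_nonneg_right hs hd0
            nlinarith
        have h1 : e + t • (e' - e) ∈ B := hmem t (by rw [abs_of_pos ht0])
        have h2 : e - t • (e' - e) ∈ B := by
          have h3 := hmem (-t) (by rw [abs_neg, abs_of_pos ht0])
          rwa [neg_smul, ← sub_eq_add_neg] at h3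
        have hseg : e ∈ openSegment ℝ (e - t • (e' - e)) (e + t • (e' - e)) :=
          ⟨1/2, 1/2, by norm_num, by norm_num, by norm_num, by module⟩
        have hboth := (mem_extremePoints.mp he).2 _ h2 _ h1 hseg
        have h4 : t • (e' - e) = 0 := by
          have h5 := hboth.1
          rwa [sub_eq_self] at h5
        rcases smul_eq_zero.mp h4 with h | h
        · exact ht0.ne' h
        · exact hv0 h
      apply Set.Finite.of_finite_image ?_ hinj
      apply Set.Finite.subset (G.finite_toSet.finite_subsets)
      rintro Aset ⟨e, _, rfl⟩
      intro f hf
      exact hf.1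
    -- Krein-Milman
    have hKM := closure_convexHull_extremePoints hBcpt hBconv
    refine ⟨extremePoints ℝ B, hext, ?_⟩
    rw [← (hext.isCompact_convexHull ℝ).isClosed.closure_eq]
    exact hKM.symm
  -- assemble the result
  refine ⟨a, ν, h1a, ?_, ?_, ?_⟩
  · exact ⟨c, A, hcpos, fun x => ⟨hplow x, hpub x⟩⟩
  · exact ⟨fun f hf x => hple f hf x, fun x hx => hbound x hx⟩
  · intro hstar
    exact ⟨hstarF hstar, fun Y hY => hpoly hstar Y hY⟩


end
end

section
/- Let X be a Banach space, S_n ⊂ S_X with S_X = ⋃_{n=1}^∞ S_n, and H_n ⊂ B_{X*} an increasing sequence of sets such that b_n = inf{ sup{h(x) : h ∈ H_n} : x ∈ S_n } are strictly positive and converge to 1. Put H = ⋃_{n=1}^∞ (H_n ∪ −H_n), n(h) = min{n : h ∈ H_n ∪ −H_n} for h ∈ H, c_n = inf{b_m : m ≥ n}, a_n = (1 + 2^{−n})/c_n, the seminorms ‖x‖_n = sup{a_{n(h)}|h(x)| : h ∈ H_n}, and |||x||| = sup{a_{n(h)}|h(x)| : h ∈ H}. Then: (i) ‖x‖ < |||x|||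 ≤ a_1‖x‖ for every x ∈ X \ {0}; (ii) for every x ∈ X there exists an integer n_x with |||x||| = ‖x‖_{n_x}; and (iii) if each H_n is a relative boundary, then F = ⋃_{n=1}^∞ a_n((H_n \ H_{n-1}) ∪ −(H_n \ H_{n-1})) (with H_0 = ∅) is a boundary with respect to |||·|||. -/
open NormedSpace Filter Set Topology Pointwise

noncomputable section

private lemma real_sSup_mul_image {t : ℝ} (ht : 0 < t) (s : Set ℝ) (hs : s.Nonempty)
    (hb : BddAbove s) : sSup ((fun v => t * v) '' s) = t * sSup s := by
  obtain ⟨M, hM⟩ := hb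
  apply le_antisymm
  · refine csSup_le (hs.image _) ?_
    rintro _ ⟨v, hv, rfl⟩
    exact mul_le_mul_of_nonneg_left (le_csSup ⟨M, hM⟩ hv) ht.le
  · rw [mul_comm, ← le_div_iff₀ ht]
    refine csSup_le hs fun v hv => ?_
    rw [le_div_iff₀ ht, mul_comm]
    refine le_csSup ⟨t * M, ?_⟩ ⟨v, hv, rfl⟩
    rintro _ ⟨w, hw, rfl⟩
    exact mul_le_mul_of_nonneg_left (hM hw) ht.le
theorem stmt3 {X : Type*} [NormedAddCommGroup X] [NormedSpace ℝ X] [CompleteSpace X]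
    (S : ℕ → Set X) (H : ℕ → Set (StrongDual ℝ X)) (b c a : ℕ → ℝ)
    (nh : StrongDual ℝ X → ℕ) (sn : ℕ → X → ℝ) (tn : X → ℝ)
    (hS : ∀ n, S n ⊆ Metric.sphere (0 : X) 1)
    (hcover : Metric.sphere (0 : X) 1 = ⋃ (n : ℕ) (_ : 1 ≤ n), S n)
    (hH0 : H 0 = ∅) (hmono : Monotone H)
    (hball : ∀ n, H n ⊆ {f : StrongDual ℝ X | ‖f‖ ≤ 1})
    (hb : ∀ n, 1 ≤ n →
      b n = sInf ((fun x : X => sSup ((fun h : StrongDual ℝ X => h x) '' H n)) '' S n))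
    (hbpos : ∀ n, 1 ≤ n → 0 < b n)
    (hblim : Tendsto b atTop (𝓝 1))
    (hc : ∀ n, 1 ≤ n → c n = sInf (b '' Set.Ici n))
    (ha : ∀ n, 1 ≤ n → a n = (1 + (2 : ℝ) ^ (-(n : ℤ))) / c n)
    (hnh : ∀ h ∈ ⋃ n, (H n ∪ -H n : Set (StrongDual ℝ X)),
      nh h = sInf {n : ℕ | h ∈ (H n ∪ -H n : Set (StrongDual ℝ X))})
    (hsn : ∀ (n : ℕ) (x : X),
      sn n x = sSup ((fun h : StrongDual ℝ X => a (nh h) * |h x|) '' H n))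
    (htn : ∀ x : X,
      tn x = sSup ((fun h : StrongDual ℝ X => a (nh h) * |h x|) ''
        ⋃ n, (H n ∪ -H n : Set (StrongDual ℝ X)))) :
    (∀ x : X, x ≠ 0 → ‖x‖ < tn x ∧ tn x ≤ a 1 * ‖x‖) ∧
    (∀ x : X, ∃ n : ℕ, 1 ≤ n ∧ tn x = sn n x) ∧
    ((∀ n, IsRelativeBoundary (H n)) →
      IsBoundaryFor tn
        (⋃ n, a n • ((H n \ H (n - 1)) ∪ -(H n \ H (n - 1))) : Set (StrongDual ℝ X))) := by
  set G : Set (StrongDual ℝ X) := ⋃ n, (H n ∪ -H n) with hGdef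
  have hHsub : ∀ n, H n ⊆ G := fun n f hf => Set.mem_iUnion.2 ⟨n, Or.inl hf⟩
  -- nh facts
  have hnh_mem : ∀ h ∈ G, h ∈ H (nh h) ∪ -H (nh h) := by
    intro h hh
    have hne : {n : ℕ | h ∈ (H n ∪ -H n : Set (StrongDual ℝ X))}.Nonempty := by
      obtain ⟨n, hn⟩ := Set.mem_iUnion.1 hh; exact ⟨n, hn⟩
    have := Nat.sInf_mem hne
    rwa [← hnh h hh] at this
  have hnh_le : ∀ h, ∀ n : ℕ, h ∈ H n ∪ -H n → nh h ≤ n := by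
    intro h n hn
    rw [hnh h (Set.mem_iUnion.2 ⟨n, hn⟩)]
    exact Nat.sInf_le hn
  have hnh_pos : ∀ h ∈ G, 1 ≤ nh h := by
    intro h hh
    rcases Nat.eq_zero_or_pos (nh h) with h0 | h1
    · exfalso
      have := hnh_mem h hh
      rw [h0, hH0] at this
      simpa using this
    · exact h1
  have hnegG : ∀ h ∈ G, -h ∈ G := by
    intro h hh
    obtain ⟨n, hn⟩ := Set.mem_iUnion.1 hh
    refine Set.mem_iUnion.2 ⟨n, ?_⟩
    rcases hn with h1 | h1
    · exact Or.inr (by rwa [Set.mem_neg, neg_neg])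
    · exact Or.inl (by rwa [Set.mem_neg] at h1)
  have hnhneg : ∀ h ∈ G, nh (-h) = nh h := by
    intro h hh
    rw [hnh _ (hnegG h hh), hnh _ hh]
    congr 1
    ext n
    simp only [Set.mem_setOf_eq, Set.mem_union, Set.mem_neg, neg_neg]
    tauto
  -- norms
  have hnormG : ∀ h ∈ G, ‖h‖ ≤ 1 := by
    intro h hh
    obtain ⟨n, hn⟩ := Set.mem_iUnion.1 hh
    rcases hn with h1 | h1
    · exact hball n h1
    · rw [Set.mem_neg] at h1
      simpa using hball n h1
  have habs : ∀ (h : StrongDual ℝ X) (x : X), ‖h‖ ≤ 1 → |h x| ≤ ‖x‖ := by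
    intro h x hn
    calc |h x| = ‖h x‖ := (Real.norm_eq_abs _).symm
      _ ≤ ‖h‖ * ‖x‖ := h.le_opNorm x
      _ ≤ 1 * ‖x‖ := by gcongr
      _ = ‖x‖ := one_mul _
  have hxnorm : ∀ n, ∀ x ∈ S n, ‖x‖ = 1 := fun n x hx =>
    mem_sphere_zero_iff_norm.1 (hS n hx)
  -- S nonempty
  have hSne : ∀ n, 1 ≤ n → (S n).Nonempty := by
    intro n hn
    rcases (S n).eq_empty_or_nonempty with h | h
    · exfalso
      have := hbpos n hn
      rw [hb n hn, h, Set.image_empty, Real.sInf_empty] at this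
      linarith
    · exact h
  -- bounds on the inner sups
  have hsupx_le : ∀ n, ∀ x : X, ‖x‖ = 1 → sSup ((fun h : StrongDual ℝ X => h x) '' H n) ≤ 1 := by
    intro n x hx
    refine Real.sSup_le ?_ zero_le_one
    rintro _ ⟨h, hh, rfl⟩
    have := habs h x (hball n hh)
    rw [hx] at this
    exact (le_abs_self _).trans this
  have hsupx_ge : ∀ n, ∀ x : X, ‖x‖ = 1 → -1 ≤ sSup ((fun h : StrongDual ℝ X => h x) '' H n) := by
    intro n x hx
    rcases (H n).eq_empty_or_nonempty with h | ⟨h0, hh0⟩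
    · rw [h, Set.image_empty, Real.sSup_empty]; norm_num
    · have hb1 : BddAbove ((fun h : StrongDual ℝ X => h x) '' H n) := by
        refine ⟨1, ?_⟩
        rintro _ ⟨h, hh, rfl⟩
        have := habs h x (hball n hh); rw [hx] at this
        exact (le_abs_self _).trans this
      have h1 : -1 ≤ h0 x := by
        have := habs h0 x (hball n hh0); rw [hx] at this
        exact neg_le_of_abs_le this
      exact h1.trans (le_csSup hb1 ⟨h0, hh0, rfl⟩)
  have hbleb : ∀ n, 1 ≤ n → ∀ x ∈ S n,
      b n ≤ sSup ((fun h : StrongDual ℝ X => h x) '' H n) := by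
    intro n hn x hx
    rw [hb n hn]
    refine csInf_le ⟨-1, ?_⟩ ⟨x, hx, rfl⟩
    rintro _ ⟨y, hy, rfl⟩
    exact hsupx_ge n y (hxnorm n y hy)
  have hble1 : ∀ n, 1 ≤ n → b n ≤ 1 := by
    intro n hn
    obtain ⟨x, hx⟩ := hSne n hn
    exact (hbleb n hn x hx).trans (hsupx_le n x (hxnorm n x hx))
  have hHne : ∀ n, 1 ≤ n → (H n).Nonempty := by
    intro n hn
    rcases (H n).eq_empty_or_nonempty with h | h
    · exfalso
      obtain ⟨x, hx⟩ := hSne n hn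
      have h1 := hbleb n hn x hx
      rw [h, Set.image_empty, Real.sSup_empty] at h1
      exact absurd h1 (not_le.2 (hbpos n hn))
    · exact h
  -- c facts
  have hbimg_ne : ∀ n : ℕ, (b '' Set.Ici n).Nonempty :=
    fun n => ⟨b n, n, Set.self_mem_Ici, rfl⟩
  have hbimg_bdd : ∀ n, 1 ≤ n → BddBelow (b '' Set.Ici n) := by
    intro n hn
    refine ⟨0, ?_⟩
    rintro _ ⟨m, hm, rfl⟩
    exact (hbpos m (hn.trans hm)).le
  have hc_le_b : ∀ n m, 1 ≤ n → n ≤ m → c n ≤ b m := by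
    intro n m hn hm
    rw [hc n hn]
    exact csInf_le (hbimg_bdd n hn) ⟨m, hm, rfl⟩
  have hc_le1 : ∀ n, 1 ≤ n → c n ≤ 1 :=
    fun n hn => (hc_le_b n n hn le_rfl).trans (hble1 n hn)
  have hcmono : ∀ n m, 1 ≤ n → n ≤ m → c n ≤ c m := by
    intro n m hn hm
    rw [hc n hn, hc m (hn.trans hm)]
    exact csInf_le_csInf (hbimg_bdd n hn) (hbimg_ne m)
      (Set.image_mono (Set.Ici_subset_Ici.2 hm))
  have hcpos : ∀ n, 1 ≤ n → 0 < c n := by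
    intro n hn
    obtain ⟨K, hK⟩ := eventually_atTop.1 (hblim.eventually (eventually_gt_nhds (by norm_num : (1:ℝ)/2 < 1)))
    have hIne : (Finset.Icc n (max n K)).Nonempty :=
      ⟨n, Finset.mem_Icc.2 ⟨le_rfl, le_max_left _ _⟩⟩
    set δ : ℝ := min (1/2) ((Finset.Icc n (max n K)).inf' hIne b) with hδdef
    have hδpos : 0 < δ := by
      refine lt_min (by norm_num) ?_
      rw [Finset.lt_inf'_iff]
      intro i hi
      exact hbpos i (hn.trans (Finset.mem_Icc.1 hi).1)
    have hδle : ∀ m, n ≤ m → δ ≤ b m := by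
      intro m hm
      rcases le_or_gt m (max n K) with h | h
      · exact (min_le_right _ _).trans (Finset.inf'_le b (Finset.mem_Icc.2 ⟨hm, h⟩))
      · have : K ≤ m := (le_max_right n K).trans h.le
        exact (min_le_left _ _).trans (hK m this).le
    rw [hc n hn]
    refine lt_of_lt_of_le hδpos (le_csInf (hbimg_ne n) ?_)
    rintro _ ⟨m, hm, rfl⟩
    exact hδle m hm
  -- a facts
  have hapos : ∀ n, 1 ≤ n → 0 < a n := by
    intro n hn
    rw [ha n hn]
    have : (0:ℝ) < 2 ^ (-(n:ℤ)) := by positivity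
    exact div_pos (by linarith) (hcpos n hn)
  have ha_gt1 : ∀ n, 1 ≤ n → 1 < a n := by
    intro n hn
    rw [ha n hn]
    rw [lt_div_iff₀ (hcpos n hn), one_mul]
    have : (0:ℝ) < 2 ^ (-(n:ℤ)) := by positivity
    linarith [hc_le1 n hn]
  have haanti : ∀ n m, 1 ≤ n → n ≤ m → a m ≤ a n := by
    intro n m hn hm
    rw [ha n hn, ha m (hn.trans hm)]
    have h2 : (2:ℝ) ^ (-(m:ℤ)) ≤ 2 ^ (-(n:ℤ)) := by
      apply zpow_le_zpow_right₀ (by norm_num)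
      omega
    have h3 : (0:ℝ) < 2 ^ (-(m:ℤ)) := by positivity
    exact div_le_div₀ (by positivity) (by linarith) (hcpos n hn) (hcmono n m hn hm)
  have halim : ∀ r : ℝ, 1 < r → ∃ N, 1 ≤ N ∧ ∀ k, N ≤ k → a k ≤ r := by
    intro r hr
    set ε : ℝ := (r - 1) / (r + 1) with hεdef
    have hε : 0 < ε := div_pos (by linarith) (by linarith)
    have hε1 : ε < 1 := by
      rw [hεdef, div_lt_one (by linarith)]; linarith
    obtain ⟨K₁, hK₁⟩ := eventually_atTop.1
      (hblim.eventually (eventually_gt_nhds (by linarith : 1 - ε < 1)))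
    obtain ⟨K₂, hK₂⟩ := exists_pow_lt_of_lt_one hε (by norm_num : (1:ℝ)/2 < 1)
    refine ⟨max 1 (max K₁ K₂), le_max_left _ _, ?_⟩
    intro k hk
    have hk1 : 1 ≤ k := le_trans (le_max_left _ _) hk
    have hkK₁ : K₁ ≤ k := le_trans ((le_max_left _ _).trans (le_max_right _ _)) hk
    have hkK₂ : K₂ ≤ k := le_trans ((le_max_right _ _).trans (le_max_right _ _)) hk
    have hck : 1 - ε ≤ c k := by
      rw [hc k hk1]
      refine le_csInf (hbimg_ne k) ?_
      rintro _ ⟨m, hm, rfl⟩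
      exact (hK₁ m (hkK₁.trans hm)).le
    have h2k : (2:ℝ) ^ (-(k:ℤ)) ≤ ε := by
      have he : (2:ℝ) ^ (-(k:ℤ)) = (1/2) ^ k := by
        rw [zpow_neg, zpow_natCast, one_div, inv_pow]
      rw [he]
      calc ((1:ℝ)/2) ^ k ≤ (1/2) ^ K₂ := by
            apply pow_le_pow_of_le_one (by norm_num) (by norm_num) hkK₂
        _ ≤ ε := hK₂.le
    rw [ha k hk1]
    rw [div_le_iff₀ (hcpos k hk1)]
    have hεr : ε * (r + 1) = r - 1 := by
      rw [hεdef]; field_simp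
    nlinarith [hcpos k hk1]
  -- tn facts
  have htset_bdd : ∀ x : X, BddAbove ((fun h : StrongDual ℝ X => a (nh h) * |h x|) '' G) := by
    intro x
    refine ⟨a 1 * ‖x‖, ?_⟩
    rintro _ ⟨h, hh, rfl⟩
    exact mul_le_mul (haanti 1 (nh h) le_rfl (hnh_pos h hh)) (habs h x (hnormG h hh))
      (abs_nonneg _) (hapos 1 le_rfl).le
  have htn_ge : ∀ (x : X) (h : StrongDual ℝ X), h ∈ G → a (nh h) * |h x| ≤ tn x := by
    intro x h hh
    rw [htn x]
    exact le_csSup (htset_bdd x) ⟨h, hh, rfl⟩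
  have htn_le : ∀ x : X, tn x ≤ a 1 * ‖x‖ := by
    intro x
    rw [htn x]
    refine Real.sSup_le ?_ (mul_nonneg (hapos 1 le_rfl).le (norm_nonneg x))
    rintro _ ⟨h, hh, rfl⟩
    exact mul_le_mul (haanti 1 (nh h) le_rfl (hnh_pos h hh)) (habs h x (hnormG h hh))
      (abs_nonneg _) (hapos 1 le_rfl).le
  -- lower bound of (i)
  have hlow : ∀ x : X, x ≠ 0 → ‖x‖ < tn x := by
    intro x hx
    have hxn : (0:ℝ) < ‖x‖ := norm_pos_iff.2 hx
    set u : X := ‖x‖⁻¹ • x with hu_def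
    have hu : ‖u‖ = 1 := norm_smul_inv_norm hx
    have husph : u ∈ Metric.sphere (0:X) 1 := mem_sphere_zero_iff_norm.2 hu
    rw [hcover] at husph
    obtain ⟨m, hm1, hum⟩ := Set.mem_iUnion₂.1 husph
    have hcm := hcpos m hm1
    have h2m : (0:ℝ) < 2 ^ (-(m:ℤ)) := by positivity
    have h1 : c m / (1 + 2 ^ (-(m:ℤ))) < sSup ((fun h : StrongDual ℝ X => h u) '' H m) := by
      refine lt_of_lt_of_le ?_ ((hc_le_b m m hm1 le_rfl).trans (hbleb m hm1 u hum))
      exact div_lt_self hcm (by linarith)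
    obtain ⟨v, ⟨h, hhm, rfl⟩, hv⟩ :=
      exists_lt_of_lt_csSup ((hHne m hm1).image _) h1
    have hGm : h ∈ G := hHsub m hhm
    have hhx : h x = ‖x‖ * h u := by
      rw [hu_def, map_smul, smul_eq_mul]
      field_simp
    have ham : a m * (c m / (1 + 2 ^ (-(m:ℤ)))) = 1 := by
      rw [ha m hm1, div_mul_div_comm, div_eq_one_iff_eq (by positivity)]
      ring
    have hstep : ‖x‖ < a m * h x := by
      have := mul_lt_mul_of_pos_left hv (mul_pos (hapos m hm1) hxn)
      calc ‖x‖ = a m * ‖x‖ * (c m / (1 + 2 ^ (-(m:ℤ)))) := by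
            rw [mul_comm (a m) ‖x‖, mul_assoc, ham, mul_one]
        _ < a m * ‖x‖ * h u := this
        _ = a m * h x := by rw [hhx]; ring
    calc ‖x‖ < a m * h x := hstep
      _ ≤ a m * |h x| := mul_le_mul_of_nonneg_left (le_abs_self _) (hapos m hm1).le
      _ ≤ a (nh h) * |h x| := mul_le_mul_of_nonneg_right
          (haanti (nh h) m (hnh_pos h hGm) (hnh_le h m (Or.inl hhm))) (abs_nonneg _)
      _ ≤ tn x := htn_ge x h hGm
  -- tn 0 = 0 and sn n 0 = 0
  have hzero : ∀ s : Set (StrongDual ℝ X),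
      sSup ((fun h : StrongDual ℝ X => a (nh h) * |h (0:X)|) '' s) = 0 := by
    intro s
    have hsub : (fun h : StrongDual ℝ X => a (nh h) * |h (0:X)|) '' s ⊆ {0} := by
      rintro _ ⟨h, hh, rfl⟩
      simp
    rcases Set.subset_singleton_iff_eq.1 hsub with h | h
    · rw [h, Real.sSup_empty]
    · rw [h, csSup_singleton]
  -- part (ii)
  have part2 : ∀ x : X, ∃ n : ℕ, 1 ≤ n ∧ tn x = sn n x := by
    intro x
    by_cases hx : x = 0
    · subst hx
      exact ⟨1, le_rfl, by rw [htn, hsn, hzero, hzero]⟩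
    · have hxn : (0:ℝ) < ‖x‖ := norm_pos_iff.2 hx
      have hT := hlow x hx
      have hT1 : 1 < tn x / ‖x‖ := (one_lt_div hxn).2 hT
      set r : ℝ := (tn x / ‖x‖ + 1) / 2 with hrdef
      have hr1 : 1 < r := by rw [hrdef]; linarith
      have hrT : r * ‖x‖ < tn x := by
        have h2 : r < tn x / ‖x‖ := by rw [hrdef]; linarith
        calc r * ‖x‖ < tn x / ‖x‖ * ‖x‖ := mul_lt_mul_of_pos_right h2 hxn
          _ = tn x := div_mul_cancel₀ _ (ne_of_gt hxn)
      obtain ⟨N, hN1, hNa⟩ := halim r hr1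
      refine ⟨N, hN1, ?_⟩
      have hsnbdd : BddAbove ((fun h : StrongDual ℝ X => a (nh h) * |h x|) '' H N) :=
        (htset_bdd x).mono (Set.image_mono (hHsub N))
      have hsn_le : sn N x ≤ tn x := by
        rw [hsn, htn]
        exact csSup_le_csSup (htset_bdd x) ((hHne N hN1).image _)
          (Set.image_mono (hHsub N))
      have hsn_nonneg : 0 ≤ sn N x := by
        rw [hsn]
        refine Real.sSup_nonneg ?_
        rintro _ ⟨h, hh, rfl⟩
        exact mul_nonneg (hapos _ (hnh_pos h (hHsub N hh))).le (abs_nonneg _)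
      have hup : tn x ≤ max (sn N x) (r * ‖x‖) := by
        rw [htn]
        refine Real.sSup_le ?_ (le_trans hsn_nonneg (le_max_left _ _))
        rintro _ ⟨h, hh, rfl⟩
        by_cases hcase : nh h ≤ N
        · have hmem2 : a (nh h) * |h x| ∈
              (fun h' : StrongDual ℝ X => a (nh h') * |h' x|) '' H N := by
            rcases hnh_mem h hh with h1 | h1
            · exact ⟨h, hmono hcase h1, rfl⟩
            · rw [Set.mem_neg] at h1
              refine ⟨-h, hmono hcase h1, ?_⟩
              show a (nh (-h)) * |(-h) x| = a (nh h) * |h x|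
              rw [hnhneg h hh]
              simp
          refine le_max_of_le_left ?_
          rw [hsn N x]
          exact le_csSup hsnbdd hmem2
        · refine le_max_of_le_right ?_
          exact mul_le_mul (hNa (nh h) (le_of_not_ge hcase)) (habs h x (hnormG h hh))
            (abs_nonneg _) (by linarith)
      rcases le_max_iff.1 hup with h | h
      · exact le_antisymm h hsn_le
      · exact absurd h (not_le.2 hrT)
  refine ⟨fun x hx => ⟨hlow x hx, htn_le x⟩, part2, ?_⟩
  -- part (iii)
  intro hRB
  constructor
  · rintro f hf x
    obtain ⟨n, hf⟩ := Set.mem_iUnion.1 hf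
    obtain ⟨g, hg, rfl⟩ := Set.mem_smul_set.1 hf
    have hn1 : 1 ≤ n := by
      by_contra hcon
      have hn0 : n = 0 := by omega
      subst hn0
      rw [hH0] at hg
      simp at hg
    have hgG : g ∈ H n ∪ -H n := by
      rcases hg with h1 | h1
      · exact Or.inl h1.1
      · rw [Set.mem_neg] at h1
        exact Or.inr (Set.mem_neg.2 h1.1)
    have hgG' : g ∈ G := Set.mem_iUnion.2 ⟨n, hgG⟩
    calc (a n • g) x = a n * g x := by
          simp [ContinuousLinearMap.smul_apply, smul_eq_mul]
      _ ≤ a n * |g x| := mul_le_mul_of_nonneg_left (le_abs_self _) (hapos n hn1).le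
      _ ≤ a (nh g) * |g x| := mul_le_mul_of_nonneg_right
          (haanti (nh g) n (hnh_pos g hgG') (hnh_le g n hgG)) (abs_nonneg _)
      _ ≤ tn x := htn_ge x g hgG'
  · intro x hx1
    have hx : x ≠ 0 := by
      rintro rfl
      rw [htn, hzero] at hx1
      norm_num at hx1
    obtain ⟨N, hN1, hNs⟩ := part2 x
    set s : ℕ → ℝ := fun k => sSup ((fun h : StrongDual ℝ X => |h x|) '' H k) with hs_def
    have hsbdd : ∀ k, BddAbove ((fun h : StrongDual ℝ X => |h x|) '' H k) := by
      intro k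
      refine ⟨‖x‖, ?_⟩
      rintro _ ⟨h, hh, rfl⟩
      exact habs h x (hball k hh)
    have hsle : ∀ k, 1 ≤ k → a k * s k ≤ 1 := by
      intro k hk
      rw [mul_comm, ← le_div_iff₀ (hapos k hk)]
      refine Real.sSup_le ?_ (div_pos one_pos (hapos k hk)).le
      rintro _ ⟨h, hh, rfl⟩
      rw [le_div_iff₀ (hapos k hk), mul_comm]
      have h1 : a k * |h x| ≤ a (nh h) * |h x| := mul_le_mul_of_nonneg_right
        (haanti (nh h) k (hnh_pos h (hHsub k hh)) (hnh_le h k (Or.inl hh))) (abs_nonneg _)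
      have h2 := htn_ge x h (hHsub k hh)
      rw [hx1] at h2
      linarith
    have hsnonneg : ∀ k, 0 ≤ s k := by
      intro k
      refine Real.sSup_nonneg ?_
      rintro _ ⟨h, hh, rfl⟩
      exact abs_nonneg _
    have hIne : (Finset.Icc 1 N).Nonempty := ⟨1, Finset.mem_Icc.2 ⟨le_rfl, hN1⟩⟩
    set M : ℝ := (Finset.Icc 1 N).sup' hIne (fun k => a k * s k) with hM_def
    have hM_le : M ≤ 1 := Finset.sup'_le _ _ fun k hk => hsle k (Finset.mem_Icc.1 hk).1
    have hM_nonneg : 0 ≤ M := le_trans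
      (mul_nonneg (hapos 1 le_rfl).le (hsnonneg 1))
      (Finset.le_sup' (fun k => a k * s k) (Finset.mem_Icc.2 ⟨le_rfl, hN1⟩))
    have hM_ge : 1 ≤ M := by
      rw [← hx1, hNs, hsn]
      refine Real.sSup_le ?_ hM_nonneg
      rintro _ ⟨h, hh, rfl⟩
      have hhk := hnh_le h N (Or.inl hh)
      have hk1 := hnh_pos h (hHsub N hh)
      have hmem : nh h ∈ Finset.Icc 1 N := Finset.mem_Icc.2 ⟨hk1, hhk⟩
      have habs_le : |h x| ≤ s (nh h) := by
        rcases hnh_mem h (hHsub N hh) with h1 | h1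
        · exact le_csSup (hsbdd _) ⟨h, h1, rfl⟩
        · rw [Set.mem_neg] at h1
          have h2 := le_csSup (hsbdd (nh h)) ⟨-h, h1, rfl⟩
          simpa using h2
      calc a (nh h) * |h x| ≤ a (nh h) * s (nh h) :=
            mul_le_mul_of_nonneg_left habs_le (hapos _ hk1).le
        _ ≤ M := Finset.le_sup' (fun k => a k * s k) hmem
    obtain ⟨k, hkI, hkeq⟩ := Finset.exists_mem_eq_sup' hIne (fun k => a k * s k)
    have hk1 : 1 ≤ k := (Finset.mem_Icc.1 hkI).1
    have haks : a k * s k = 1 := by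
      rw [← hkeq]; exact le_antisymm hM_le hM_ge
    have hsk : s k = 1 / a k := by
      rw [eq_div_iff (ne_of_gt (hapos k hk1))]
      linarith [haks]
    have hskpos : 0 < s k := by
      rw [hsk]
      exact div_pos one_pos (hapos k hk1)
    set P : ℝ := sSup ((fun h : StrongDual ℝ X => h x) '' H k) with hP_def
    set Q : ℝ := sSup ((fun h : StrongDual ℝ X => h (-x)) '' H k) with hQ_def
    have hPbdd : BddAbove ((fun h : StrongDual ℝ X => h x) '' H k) := by
      refine ⟨‖x‖, ?_⟩
      rintro _ ⟨h, hh, rfl⟩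
      exact (le_abs_self _).trans (habs h x (hball k hh))
    have hQbdd : BddAbove ((fun h : StrongDual ℝ X => h (-x)) '' H k) := by
      refine ⟨‖x‖, ?_⟩
      rintro _ ⟨h, hh, rfl⟩
      have := (le_abs_self _).trans (habs h (-x) (hball k hh))
      rwa [norm_neg] at this
    have hPle : P ≤ s k := by
      refine csSup_le ((hHne k hk1).image _) ?_
      rintro _ ⟨h, hh, rfl⟩
      exact (le_abs_self _).trans (le_csSup (hsbdd k) ⟨h, hh, rfl⟩)
    have hQle : Q ≤ s k := by
      refine csSup_le ((hHne k hk1).image _) ?_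
      rintro _ ⟨h, hh, rfl⟩
      have : h (-x) ≤ |h x| := by
        rw [map_neg]
        exact neg_le_abs _
      exact this.trans (le_csSup (hsbdd k) ⟨h, hh, rfl⟩)
    have hsmax : s k ≤ max P Q := by
      refine csSup_le ((hHne k hk1).image _) ?_
      rintro _ ⟨h, hh, rfl⟩
      show |h x| ≤ max P Q
      rw [abs_eq_max_neg]
      refine max_le_max ?_ ?_
      · exact le_csSup hPbdd ⟨h, hh, rfl⟩
      · have : -(h x) = h (-x) := (map_neg h x).symm
        rw [this]
        exact le_csSup hQbdd ⟨h, hh, rfl⟩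
    have hmaxeq : max P Q = s k := le_antisymm (max_le hPle hQle) hsmax
    have main : ∀ y : X, (y = x ∨ y = -x) →
        sSup ((fun h : StrongDual ℝ X => h y) '' H k) = s k →
        ∃ f ∈ (⋃ n, a n • ((H n \ H (n - 1)) ∪ -(H n \ H (n - 1))) : Set (StrongDual ℝ X)),
          f x = 1 := by
      intro y hy hyS
      have hybdd : BddAbove ((fun h : StrongDual ℝ X => h y) '' H k) := by
        rcases hy with rfl | rfl
        · exact hPbdd
        · exact hQbdd
      have hscaled : sSup ((fun h : StrongDual ℝ X => h (a k • y)) '' H k) = 1 := by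
        have himg : (fun h : StrongDual ℝ X => h (a k • y)) '' H k =
            (fun v => a k * v) '' ((fun h : StrongDual ℝ X => h y) '' H k) := by
          rw [Set.image_image]
          apply Set.image_congr
          intro h _
          rw [map_smul, smul_eq_mul]
        rw [himg, real_sSup_mul_image (hapos k hk1) _ ((hHne k hk1).image _) hybdd,
          hyS, haks]
      obtain ⟨h, hhk, hh1⟩ := hRB k (a k • y) hscaled
      have hh1' : a k * h y = 1 := by
        rw [map_smul, smul_eq_mul] at hh1
        exact hh1
      set j : ℕ := sInf {n : ℕ | h ∈ H n} with hj_def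
      have hjmem : h ∈ H j := by
        have h9 : ({n : ℕ | h ∈ H n}).Nonempty := ⟨k, hhk⟩
        exact Nat.sInf_mem h9
      have hjle : j ≤ k := Nat.sInf_le hhk
      have hj1 : 1 ≤ j := by
        rcases Nat.eq_zero_or_pos j with h0 | h1
        · exfalso
          rw [h0, hH0] at hjmem
          exact hjmem
        · exact h1
      have hjnot : h ∉ H (j - 1) := fun hmem => by
        have := Nat.sInf_le (show j - 1 ∈ {n : ℕ | h ∈ H n} from hmem)
        omega
      have haj : a k ≤ a j := haanti j k hj1 hjle
      have hhy_pos : 0 ≤ h y := by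
        have hy_eq : h y = 1 / a k := by
          rw [eq_div_iff (ne_of_gt (hapos k hk1))]
          linarith [hh1']
        rw [hy_eq]
        exact (div_pos one_pos (hapos k hk1)).le
      have hGj : h ∈ G := hHsub j hjmem
      have h1 : |h y| = |h x| := by
        rcases hy with rfl | rfl
        · rfl
        · rw [map_neg, abs_neg]
      have hup2 : a j * h y ≤ 1 := by
        calc a j * h y ≤ a j * |h y| := mul_le_mul_of_nonneg_left (le_abs_self _) (hapos j hj1).le
          _ = a j * |h x| := by rw [h1]
          _ ≤ a (nh h) * |h x| := mul_le_mul_of_nonneg_right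
              (haanti (nh h) j (hnh_pos h hGj) (hnh_le h j (Or.inl hjmem))) (abs_nonneg _)
          _ ≤ tn x := htn_ge x h hGj
          _ = 1 := hx1
      have hdown2 : 1 ≤ a j * h y := by
        calc (1:ℝ) = a k * h y := hh1'.symm
          _ ≤ a j * h y := mul_le_mul_of_nonneg_right haj hhy_pos
      have hajy : a j * h y = 1 := le_antisymm hup2 hdown2
      rcases hy with rfl | rfl
      · refine ⟨a j • h, ?_, ?_⟩
        · exact Set.mem_iUnion.2 ⟨j, Set.smul_mem_smul_set (Or.inl ⟨hjmem, hjnot⟩)⟩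
        · rw [ContinuousLinearMap.smul_apply, smul_eq_mul]
          exact hajy
      · refine ⟨a j • (-h), ?_, ?_⟩
        · refine Set.mem_iUnion.2 ⟨j, Set.smul_mem_smul_set (Or.inr ?_)⟩
          rw [Set.mem_neg, neg_neg]
          exact ⟨hjmem, hjnot⟩
        · rw [ContinuousLinearMap.smul_apply, smul_eq_mul, ContinuousLinearMap.neg_apply]
          rw [map_neg] at hajy
          linarith [hajy]

    rcases max_choice P Q with hPQ | hPQ
    · exact main x (Or.inl rfl) (hPQ.symm.trans hmaxeq)
    · exact main (-x) (Or.inr rfl) (hPQ.symm.trans hmaxeq)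

end
end

section
/- Let X be a set equipped with two Hausdorff topologies τ and ρ, with ρ finer than τ, and let E ⊂ X be (τ,ρ)-LRC. Then there exists a τ-open set V such that E ⊆ cl_τ(E) ∩ V ⊆ cl_ρ(E), and cl_τ(E) ∩ V is also (τ,ρ)-LRC (here cl_τ and cl_ρ denote closure in the respective topologies). -/
open Set Topology

noncomputable section

/-- `E` is `τ`-locally relatively `ρ`-compact: every point of `E` has a `τ`-open
neighbourhood `U` such that the `ρ`-closure of `E ∩ U` is `ρ`-compact. -/
def IsLRC {X : Type*} (t r : TopologicalSpace X) (E : Set X) : Prop :=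
  ∀ x ∈ E, ∃ U : Set X, @IsOpen X t U ∧ x ∈ U ∧ @IsCompact X r (@closure X r (E ∩ U))

section Helpers
variable {X : Type*}

private lemma myClosureMinimal (T : TopologicalSpace X) {s t : Set X}
    (h : s ⊆ t) (ht : @IsClosed X T t) : @closure X T s ⊆ t := by
  letI := T; exact closure_minimal h ht

private lemma mySubsetClosure (T : TopologicalSpace X) (s : Set X) :
    s ⊆ @closure X T s := by letI := T; exact subset_closure

private lemma myClosureMono (T : TopologicalSpace X) {s t : Set X}
    (h : s ⊆ t) : @closure X T s ⊆ @closure X T t := by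
  letI := T; exact closure_mono h

private lemma myInterClosure (T : TopologicalSpace X) {s : Set X} (t : Set X)
    (hs : @IsOpen X T s) : s ∩ @closure X T t ⊆ @closure X T (s ∩ t) := by
  letI := T; exact hs.inter_closure

private lemma myIsClosedClosure (T : TopologicalSpace X) (s : Set X) :
    @IsClosed X T (@closure X T s) := by letI := T; exact isClosed_closure

private lemma myCompactIsClosed (T : TopologicalSpace X) (h2 : @T2Space X T) {s : Set X}
    (hs : @IsCompact X T s) : @IsClosed X T s := by
  letI := T; exact hs.isClosed

private lemma myCompactOfClosedSubset (T : TopologicalSpace X) {s t : Set X}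
    (hs : @IsCompact X T s) (ht : @IsClosed X T t) (h : t ⊆ s) : @IsCompact X T t := by
  letI := T; exact hs.of_isClosed_subset ht h

end Helpers

theorem stmt9 {X : Type*} (t r : TopologicalSpace X)
    (ht2 : @T2Space X t) (hr2 : @T2Space X r) (hfiner : r ≤ t)
    (E : Set X) (hE : IsLRC t r E) :
    ∃ V : Set X, @IsOpen X t V ∧
      E ⊆ @closure X t E ∩ V ∧
      @closure X t E ∩ V ⊆ @closure X r E ∧
      IsLRC t r (@closure X t E ∩ V) := by
  classical
  choose! U hUo hxU hUc using hE
  set V : Set X := ⋃ x ∈ E, U x with hV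
  have hVopen : @IsOpen X t V :=
    @isOpen_biUnion X X t E U (fun x hx => hUo x hx)
  have key : ∀ x ∈ E, @closure X t E ∩ U x ⊆ @closure X r (E ∩ U x) := by
    intro x hx
    have hcont : @Continuous X X r t id := continuous_id_of_le hfiner
    have hcmp : @IsCompact X t (@closure X r (E ∩ U x)) := by
      have := @IsCompact.image X X r t _ id (hUc x hx) hcont
      simpa using this
    have hclosed : @IsClosed X t (@closure X r (E ∩ U x)) :=
      myCompactIsClosed t ht2 hcmp
    have h1 : U x ∩ @closure X t E ⊆ @closure X t (U x ∩ E) :=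
      myInterClosure t E (hUo x hx)
    have h2 : @closure X t E ∩ U x ⊆ @closure X t (E ∩ U x) := by
      rw [inter_comm]
      intro y hy
      have := h1 hy
      rwa [inter_comm] at this
    refine h2.trans ?_
    exact myClosureMinimal t
      (mySubsetClosure r (E ∩ U x)) hclosed
  refine ⟨V, hVopen, ?_, ?_, ?_⟩
  · intro x hx
    exact ⟨mySubsetClosure t E hx, mem_biUnion hx (hxU x hx)⟩
  · rintro y ⟨hyc, hyV⟩
    obtain ⟨x, hx, hyU⟩ := mem_iUnion₂.mp hyV
    exact (myClosureMono r (inter_subset_left (t := U x))) (key x hx ⟨hyc, hyU⟩)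
  · intro y hy
    obtain ⟨hyc, hyV⟩ := hy
    obtain ⟨x, hx, hyU⟩ := mem_iUnion₂.mp hyV
    refine ⟨U x, hUo x hx, hyU, ?_⟩
    have hsub : (@closure X t E ∩ V) ∩ U x ⊆ @closure X r (E ∩ U x) := by
      rintro z ⟨⟨hzc, _⟩, hzU⟩
      exact key x hx ⟨hzc, hzU⟩
    have hclsub : @closure X r ((@closure X t E ∩ V) ∩ U x) ⊆ @closure X r (E ∩ U x) :=
      myClosureMinimal r hsub (myIsClosedClosure r _)
    exact myCompactOfClosedSubset r (hUc x hx)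
      (myIsClosedClosure r _) hclsub

end
end

section
/- Let X be a Banach space and let F ⊂ X* be a norm-bounded set having property (*). Then F is a relative boundary: whenever x ∈ X satisfies sup{f(x) : f ∈ F} = 1, there exists f_x ∈ F with f_x(x) = 1. -/
open NormedSpace Filter Set Topology Pointwise

noncomputable section

theorem stmt11 {X : Type*} [NormedAddCommGroup X] [NormedSpace ℝ X] [CompleteSpace X]
    (F : Set (StrongDual ℝ X)) (hbdd : Bornology.IsBounded F)
    (hstar : PropertyStar F) :
    IsRelativeBoundary F := by
  intro x hsup
  by_contra hne
  push_neg at hne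
  -- F is nonempty
  have hFne : F.Nonempty := by
    rcases F.eq_empty_or_nonempty with h | h
    · rw [h] at hsup; simp at hsup
    · exact h
  -- bound
  obtain ⟨r, hr⟩ := hbdd.subset_closedBall 0
  have himgbdd : BddAbove ((fun f : StrongDual ℝ X => f x) '' F) := by
    refine ⟨r * ‖x‖, ?_⟩
    rintro y ⟨f, hf, rfl⟩
    have h1 : ‖f‖ ≤ r := by simpa using hr hf
    calc f x ≤ ‖f x‖ := le_abs_self _
      _ ≤ ‖f‖ * ‖x‖ := f.le_opNorm x
      _ ≤ r * ‖x‖ := mul_le_mul_of_nonneg_right h1 (norm_nonneg x)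
  have hle1 : ∀ f ∈ F, f x ≤ 1 := by
    intro f hf
    have := le_csSup himgbdd (mem_image_of_mem (fun f : StrongDual ℝ X => f x) hf)
    rwa [hsup] at this
  have hlt1 : ∀ f ∈ F, f x < 1 := fun f hf => lt_of_le_of_ne (hle1 f hf) (hne f hf)
  have key : ∀ c : ℝ, c < 1 → ∃ f : {f : StrongDual ℝ X // f ∈ F ∧ f x < 1}, c < f.1 x := by
    intro c hc
    obtain ⟨y, ⟨f, hf, rfl⟩, hy⟩ :=
      exists_lt_of_lt_csSup (hFne.image (fun f : StrongDual ℝ X => f x)) (hsup ▸ hc)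
    exact ⟨⟨f, hf, hlt1 f hf⟩, hy⟩
  choose pick hpick using key
  -- recursive sequence
  let u : ℕ → {f : StrongDual ℝ X // f ∈ F ∧ f x < 1} := fun n =>
    Nat.rec (pick 0 one_pos)
      (fun k fk => pick (max (fk.1 x) (1 - 1 / (k + 2)))
        (max_lt fk.2.2 (sub_lt_self 1 (by positivity)))) n
  have hu_succ : ∀ n, max ((u n).1 x) (1 - 1 / (n + 2)) < (u (n + 1)).1 x :=
    fun n => hpick _ _
  have hmono : StrictMono fun n => (u n).1 x :=
    strictMono_nat_of_lt_succ fun n => lt_of_le_of_lt (le_max_left _ _) (hu_succ n)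
  have hlow : ∀ n : ℕ, 1 - 1 / ((n : ℝ) + 1) < (u n).1 x := by
    intro n
    cases n with
    | zero => exact lt_of_eq_of_lt (by norm_num) (hpick 0 one_pos)
    | succ k =>
        refine lt_of_le_of_lt (le_trans (le_of_eq ?_) (le_max_right _ _)) (hu_succ k)
        push_cast; ring_nf
  have htend : Tendsto (fun n => (u n).1 x) atTop (𝓝 1) := by
    have h1 : Tendsto (fun n : ℕ => 1 - 1 / ((n : ℝ) + 1)) atTop (𝓝 1) := by
      have := tendsto_one_div_add_atTop_nhds_zero_nat (𝕜 := ℝ)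
      simpa using tendsto_const_nhds.sub this
    exact tendsto_of_tendsto_of_tendsto_of_le_of_le h1 tendsto_const_nhds
      (fun n => (hlow n).le) (fun n => (u n).2.2.le)
  -- Banach-Alaoglu
  have hK : IsCompact (WeakDual.toStrongDual ⁻¹' Metric.closedBall (0 : StrongDual ℝ X) r) :=
    WeakDual.isCompact_closedBall (0 : StrongDual ℝ X) r
  set seq : ℕ → WeakDual ℝ X := fun n => StrongDual.toWeakDual (u n).1 with hseq
  have hseqmem : ∀ n, seq n ∈ WeakDual.toStrongDual ⁻¹' Metric.closedBall (0 : StrongDual ℝ X) r :=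
    fun n => hr (u n).2.1
  obtain ⟨g, hgK, hg⟩ := hK.exists_clusterPt
    (f := Filter.map seq atTop)
    (le_principal_iff.2 (Filter.eventually_atTop.mpr ⟨0, fun n _ => hseqmem n⟩ :
      ∀ᶠ n in atTop, seq n ∈ _))
  -- g as a normed dual element
  have hlim : IsWeakStarLimitPoint F (WeakDual.toStrongDual g) := by
    intro U hU hgU
    have hUnhds : U ∈ 𝓝 g := hU.mem_nhds hgU
    have hfreq : ∃ᶠ n in atTop, seq n ∈ U :=
      (mapClusterPt_iff_frequently.mp hg) U hUnhds
    have hSinf : {n : ℕ | seq n ∈ U}.Infinite := Nat.frequently_atTop_iff_infinite.mp hfreq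
    have huinj : Function.Injective fun n => (u n).1 := by
      intro m n h
      exact hmono.injective (by simp only [h])
    have himg : ((fun n => (u n).1) '' {n : ℕ | seq n ∈ U}).Infinite :=
      hSinf.image (huinj.injOn)
    refine himg.mono ?_
    rintro f ⟨n, hn, rfl⟩
    exact ⟨(u n).2.1, hn⟩
  have hg1 : g x = 1 := by
    have hc : ContinuousAt (fun φ : WeakDual ℝ X => φ x) g :=
      (WeakDual.eval_continuous x).continuousAt
    have hf : Tendsto (fun φ : WeakDual ℝ X => φ x) (Filter.map seq atTop)
        (Filter.map (fun n => (u n).1 x) atTop) :=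
      Filter.tendsto_map'_iff.mpr Filter.tendsto_map
    have hcp : ClusterPt (g x) (Filter.map (fun n => (u n).1 x) atTop) := hg.map hc hf
    exact eq_of_nhds_neBot (hcp.mono htend)
  have := hstar (WeakDual.toStrongDual g) hlim x hsup
  rw [show (WeakDual.toStrongDual g) x = g x from rfl, hg1] at this
  exact lt_irrefl 1 this

end
end

section
/- Let (X, ‖·‖) be a Banach space that admits a boundary contained in a norm-σ-compact subset of the dual unit ball B_{X*} (a countable union of norm-compact sets). Then, for every ε > 0, X admits an equivalent polyhedral norm |||·||| satisfying (1−ε)‖x‖ ≤ |||x||| ≤ (1+ε)‖x‖ for all x ∈ X, which admits a boundary having property (*). -/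
open NormedSpace Filter Set Topology Pointwise

noncomputable section

namespace Stmt13Aux

variable {X : Type*} [NormedAddCommGroup X] [NormedSpace ℝ X]

/-- The union of the stages. -/
def Dd (Dn : ℕ → Set (StrongDual ℝ X)) : Set (StrongDual ℝ X) := ⋃ n, Dn n

/-- evaluation image -/
def Ev (Dn : ℕ → Set (StrongDual ℝ X)) (x : X) : Set ℝ := (fun f : StrongDual ℝ X => f x) '' (Dd Dn)

/-- the new norm -/
def nu (Dn : ℕ → Set (StrongDual ℝ X)) (x : X) : ℝ := sSup (Ev Dn x)

structure Good (Dn : ℕ → Set (StrongDual ℝ X)) (lam : ℕ → ℝ) (ε : ℝ) : Prop where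
  fin : ∀ n, (Dn n).Finite
  bound : ∀ n, ∀ f ∈ Dn n, ∀ x : X, f x ≤ lam n * ‖x‖
  symm : ∀ n, ∀ f ∈ Dn n, -f ∈ Dn n
  lam_anti : StrictAnti lam
  lam_ge : ∀ n, 1 ≤ lam n
  lam_le : ∀ n, lam n ≤ 1 + ε
  eps_pos : 0 < ε
  key : ∀ x : X, ∃ m, ∃ h ∈ Dn m, lam (m + 1) * ‖x‖ ≤ h x

variable {Dn : ℕ → Set (StrongDual ℝ X)} {lam : ℕ → ℝ} {ε : ℝ}

namespace Good

theorem le_bound (hG : Good Dn lam ε) {f : StrongDual ℝ X} (hf : f ∈ Dd Dn) (x : X) :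
    f x ≤ (1 + ε) * ‖x‖ := by
  obtain ⟨n, hn⟩ := mem_iUnion.1 hf
  refine (hG.bound n f hn x).trans ?_
  have := hG.lam_le n
  nlinarith [norm_nonneg x]

theorem bddAbove_Ev (hG : Good Dn lam ε) (x : X) : BddAbove (Ev Dn x) := by
  refine ⟨(1 + ε) * ‖x‖, ?_⟩
  rintro v ⟨f, hf, rfl⟩
  exact hG.le_bound hf x

theorem apply_le_nu (hG : Good Dn lam ε) {f : StrongDual ℝ X} (hf : f ∈ Dd Dn) (x : X) :
    f x ≤ nu Dn x :=
  le_csSup (hG.bddAbove_Ev x) ⟨f, hf, rfl⟩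

theorem exists_lower (hG : Good Dn lam ε) (x : X) :
    ∃ m, lam (m + 1) * ‖x‖ ≤ nu Dn x := by
  obtain ⟨m, h, hh, hle⟩ := hG.key x
  exact ⟨m, hle.trans (hG.apply_le_nu (mem_iUnion.2 ⟨m, hh⟩) x)⟩

theorem norm_le_nu (hG : Good Dn lam ε) (x : X) : ‖x‖ ≤ nu Dn x := by
  obtain ⟨m, hm⟩ := hG.exists_lower x
  have h1 : 1 ≤ lam (m + 1) := hG.lam_ge _
  nlinarith [norm_nonneg x]

theorem nu_nonneg (hG : Good Dn lam ε) (x : X) : 0 ≤ nu Dn x :=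
  (norm_nonneg x).trans (hG.norm_le_nu x)

theorem nu_le (hG : Good Dn lam ε) (x : X) : nu Dn x ≤ (1 + ε) * ‖x‖ := by
  refine Real.sSup_le ?_ (by nlinarith [norm_nonneg x, hG.eps_pos])
  rintro v ⟨f, hf, rfl⟩
  exact hG.le_bound hf x

theorem nu_add_le (hG : Good Dn lam ε) (x y : X) :
    nu Dn (x + y) ≤ nu Dn x + nu Dn y := by
  refine Real.sSup_le ?_ (add_nonneg (hG.nu_nonneg x) (hG.nu_nonneg y))
  rintro v ⟨f, hf, rfl⟩
  show f (x + y) ≤ _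
  rw [map_add f x y]
  exact add_le_add (hG.apply_le_nu hf x) (hG.apply_le_nu hf y)

theorem dd_symm (hG : Good Dn lam ε) {f : StrongDual ℝ X} (hf : f ∈ Dd Dn) : -f ∈ Dd Dn := by
  obtain ⟨n, hn⟩ := mem_iUnion.1 hf
  exact mem_iUnion.2 ⟨n, hG.symm n f hn⟩

theorem Ev_neg (hG : Good Dn lam ε) (x : X) : Ev Dn (-x) = Ev Dn x := by
  ext v
  constructor
  · rintro ⟨f, hf, rfl⟩
    refine ⟨-f, hG.dd_symm hf, ?_⟩
    simp
  · rintro ⟨f, hf, rfl⟩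
    refine ⟨-f, hG.dd_symm hf, ?_⟩
    simp

theorem nu_neg (hG : Good Dn lam ε) (x : X) : nu Dn (-x) = nu Dn x := by
  unfold nu; rw [hG.Ev_neg]

theorem nu_smul_nonneg (hG : Good Dn lam ε) {a : ℝ} (ha : 0 ≤ a) (x : X) :
    nu Dn (a • x) = a * nu Dn x := by
  have himg : Ev Dn (a • x) = a • Ev Dn x := by
    unfold Ev
    rw [← Set.image_smul, Set.image_image]
    apply Set.image_congr
    intro f _
    simp [smul_eq_mul]
  unfold nu
  rw [himg, Real.sSup_smul_of_nonneg ha, smul_eq_mul]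

theorem nu_smul (hG : Good Dn lam ε) (a : ℝ) (x : X) :
    nu Dn (a • x) = ‖a‖ * nu Dn x := by
  rcases le_or_gt 0 a with ha | ha
  · rw [hG.nu_smul_nonneg ha, Real.norm_eq_abs, abs_of_nonneg ha]
  · have : a • x = (-a) • (-x) := by simp
    rw [this, hG.nu_smul_nonneg (by linarith), hG.nu_neg, Real.norm_eq_abs, abs_of_neg ha]

/-- The seminorm. -/
def nuS (hG : Good Dn lam ε) : Seminorm ℝ X :=
  Seminorm.of (nu Dn) hG.nu_add_le hG.nu_smul

@[simp] theorem nuS_apply (hG : Good Dn lam ε) (x : X) : hG.nuS x = nu Dn x := rfl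

theorem nu_zero (hG : Good Dn lam ε) : nu Dn (0 : X) = 0 := map_zero hG.nuS

theorem nu_lipschitz (hG : Good Dn lam ε) (x y : X) :
    |nu Dn x - nu Dn y| ≤ (1 + ε) * ‖x - y‖ := by
  rw [abs_sub_le_iff]
  constructor
  · have h1 : nu Dn x ≤ nu Dn (x - y) + nu Dn y := by
      have := hG.nu_add_le (x - y) y; simpa using this
    have h2 := hG.nu_le (x - y)
    linarith
  · have h1 : nu Dn y ≤ nu Dn (y - x) + nu Dn x := by
      have := hG.nu_add_le (y - x) x; simpa using this
    have h2 := hG.nu_le (y - x)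
    rw [norm_sub_rev] at h2
    linarith

theorem nu_continuous (hG : Good Dn lam ε) : Continuous (nu Dn) := by
  have h0 : 0 ≤ 1 + ε := by nlinarith [hG.eps_pos]
  apply (LipschitzWith.of_dist_le_mul (K := ⟨1 + ε, h0⟩) ?_).continuous
  intro x y
  show dist (nu Dn x) (nu Dn y) ≤ (1 + ε) * dist x y
  simpa [Real.dist_eq, dist_eq_norm] using hG.nu_lipschitz x y

/-- attainment of the sup on the finitely many low stages, provided the tail is dominated. -/
theorem attain_of (hG : Good Dn lam ε) (m : ℕ) (x : X)
    (hlt : lam (m + 2) * ‖x‖ < nu Dn x) :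
    ∃ f ∈ ⋃ n ∈ Finset.range (m + 2), Dn n, f x = nu Dn x := by
  classical
  set Dle : Set (StrongDual ℝ X) := ⋃ n ∈ Finset.range (m + 2), Dn n with hDle
  have hDleFin : Dle.Finite :=
    Set.Finite.biUnion (Finset.range (m + 2)).finite_toSet (fun n _ => hG.fin n)
  have hDleSub : Dle ⊆ Dd Dn := by
    intro f hf
    simp only [hDle, mem_iUnion] at hf
    obtain ⟨n, _, hn⟩ := hf
    exact mem_iUnion.2 ⟨n, hn⟩
  -- the sup over everything is at most max of (max over Dle) and the tail bound
  have htail : ∀ f ∈ Dd Dn, f ∉ Dle → f x ≤ lam (m + 2) * ‖x‖ := by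
    intro f hf hfn
    obtain ⟨n, hn⟩ := mem_iUnion.1 hf
    have hnge : m + 2 ≤ n := by
      by_contra hc
      exact hfn (by
        simp only [hDle, mem_iUnion]
        exact ⟨n, Finset.mem_range.2 (by omega), hn⟩)
    refine (hG.bound n f hn x).trans ?_
    have : lam n ≤ lam (m + 2) := hG.lam_anti.antitone hnge
    nlinarith [norm_nonneg x]
  rcases Dle.eq_empty_or_nonempty with hemp | hne
  · exfalso
    have : nu Dn x ≤ lam (m + 2) * ‖x‖ := by
      refine Real.sSup_le ?_ ?_
      · rintro v ⟨f, hf, rfl⟩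
        exact htail f hf (by simp [hemp])
      · have h1 := hG.lam_ge (m + 2)
        nlinarith [norm_nonneg x]
    linarith
  · obtain ⟨f₀, hf₀, hmax⟩ := Set.Finite.exists_maximalFor (fun f : StrongDual ℝ X => f x) Dle hDleFin hne
    -- f₀ realizes the max of f x over Dle
    have hmax' : ∀ f ∈ Dle, f x ≤ f₀ x := by
      intro f hf
      rcases le_or_gt (f x) (f₀ x) with h | h
      · exact h
      · exact hmax hf h.le
    have hle1 : nu Dn x ≤ max (f₀ x) (lam (m + 2) * ‖x‖) := by
      refine Real.sSup_le ?_ ?_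
      · rintro v ⟨f, hf, rfl⟩
        by_cases hfl : f ∈ Dle
        · exact le_max_of_le_left (hmax' f hfl)
        · exact le_max_of_le_right (htail f hf hfl)
      · refine le_max_of_le_right ?_
        have h1 := hG.lam_ge (m + 2)
        nlinarith [norm_nonneg x]
    have hle2 : nu Dn x ≤ f₀ x := by
      rcases max_cases (f₀ x) (lam (m + 2) * ‖x‖) with ⟨heq, _⟩ | ⟨heq, _⟩
      · rwa [heq] at hle1
      · rw [heq] at hle1; linarith
    exact ⟨f₀, hf₀, le_antisymm (hG.apply_le_nu (hDleSub hf₀) x) hle2⟩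

theorem Ev_zero (hG : Good Dn lam ε) : Ev Dn (0 : X) = {0} := by
  obtain ⟨m, h, hh, _⟩ := hG.key 0
  have hne : (Dd Dn).Nonempty := ⟨h, mem_iUnion.2 ⟨m, hh⟩⟩
  apply Subset.antisymm
  · rintro v ⟨f, _, rfl⟩
    simp
  · rintro v rfl
    exact ⟨h, mem_iUnion.2 ⟨m, hh⟩, by simp⟩

theorem ne_zero_of_nu_eq_one (hG : Good Dn lam ε) {x : X} (hx : nu Dn x = 1) : x ≠ 0 := by
  rintro rfl
  rw [hG.nu_zero] at hx
  norm_num at hx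

theorem exists_strict_lower (hG : Good Dn lam ε) {x : X} (hx : x ≠ 0) :
    ∃ m, lam (m + 2) * ‖x‖ < nu Dn x := by
  obtain ⟨m, hm⟩ := hG.exists_lower x
  refine ⟨m, lt_of_lt_of_le ?_ hm⟩
  have hxl : 0 < ‖x‖ := norm_pos_iff.2 hx
  have := hG.lam_anti (Nat.lt_succ_self (m + 1))
  nlinarith

theorem attain (hG : Good Dn lam ε) {x : X} (hx : x ≠ 0) :
    ∃ f ∈ Dd Dn, f x = nu Dn x := by
  obtain ⟨m, hm⟩ := hG.exists_strict_lower hx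
  obtain ⟨f, hf, hfx⟩ := hG.attain_of m x hm
  simp only [mem_iUnion] at hf
  obtain ⟨n, _, hn⟩ := hf
  exact ⟨f, mem_iUnion.2 ⟨n, hn⟩, hfx⟩

theorem isBoundaryFor (hG : Good Dn lam ε) :
    IsBoundaryFor (fun x : X => nu Dn x) (Dd Dn) := by
  constructor
  · intro f hf x
    exact hG.apply_le_nu hf x
  · intro x hx
    have hx' : nu Dn x = 1 := hx
    obtain ⟨f, hf, hfx⟩ := hG.attain (hG.ne_zero_of_nu_eq_one hx')
    exact ⟨f, hf, by rw [hfx, hx']⟩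

theorem propertyStar (hG : Good Dn lam ε) : PropertyStar (Dd Dn) := by
  intro g hg x hsup
  have hnusup : nu Dn x = 1 := hsup
  have hx : x ≠ 0 := hG.ne_zero_of_nu_eq_one hnusup
  obtain ⟨m, hm⟩ := hG.exists_lower x
  have hxl : 0 < ‖x‖ := norm_pos_iff.2 hx
  -- claim : g x ≤ lam (m+2) * ‖x‖
  have hclaim : g x ≤ lam (m + 2) * ‖x‖ := by
    by_contra hc
    push_neg at hc
    set U : Set (WeakDual ℝ X) := (fun h : WeakDual ℝ X => h x) ⁻¹' (Ioi (lam (m + 2) * ‖x‖))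
      with hU
    have hUopen : IsOpen U := isOpen_Ioi.preimage (WeakDual.eval_continuous x)
    have hgU : StrongDual.toWeakDual g ∈ U := hc
    have hinf := hg U hUopen hgU
    have hsubset : {f : StrongDual ℝ X | f ∈ Dd Dn ∧ StrongDual.toWeakDual f ∈ U} ⊆
        ⋃ n ∈ Finset.range (m + 2), Dn n := by
      rintro f ⟨hfD, hfU⟩
      obtain ⟨n, hn⟩ := mem_iUnion.1 hfD
      have hfx : lam (m + 2) * ‖x‖ < f x := hfU
      have hnlt : n < m + 2 := by
        by_contra hcn
        push_neg at hcn
        have h1 := hG.bound n f hn x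
        have h2 : lam n ≤ lam (m + 2) := hG.lam_anti.antitone hcn
        nlinarith
      simp only [mem_iUnion]
      exact ⟨n, Finset.mem_range.2 hnlt, hn⟩
    have hfin : (⋃ n ∈ Finset.range (m + 2), Dn n).Finite :=
      Set.Finite.biUnion (Finset.range (m + 2)).finite_toSet (fun n _ => hG.fin n)
    exact (hfin.subset hsubset).not_infinite hinf
  have hlt : lam (m + 2) * ‖x‖ < lam (m + 1) * ‖x‖ := by
    have := hG.lam_anti (Nat.lt_succ_self (m + 1))
    nlinarith
  calc g x ≤ lam (m + 2) * ‖x‖ := hclaim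
    _ < lam (m + 1) * ‖x‖ := hlt
    _ ≤ nu Dn x := hm
    _ = 1 := hnusup

end Good

theorem isCompact_of_sub (Y : Subspace ℝ X) [FiniteDimensional ℝ Y] {S : Set X}
    (hSY : S ⊆ (Y : Set X)) (hScl : IsClosed S) {R : ℝ} (hSb : ∀ x ∈ S, ‖x‖ ≤ R) :
    IsCompact S := by
  have hK : IsCompact ((Subtype.val : Y → X) '' (Metric.closedBall (0 : Y) R)) :=
    (isCompact_closedBall (0 : Y) R).image continuous_subtype_val
  apply hK.of_isClosed_subset hScl
  intro x hx
  refine ⟨⟨x, hSY hx⟩, ?_, rfl⟩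
  simpa [Metric.mem_closedBall, dist_zero_right] using hSb x hx

namespace Good

theorem polyhedral [CompleteSpace X] (hG : Good Dn lam ε) :
    IsPolyhedralNorm (fun x : X => nu Dn x) := by
  classical
  intro Y hY
  by_cases hY0 : ∀ y : X, y ∈ Y → y = 0
  · refine ⟨{0}, finite_singleton 0, ?_⟩
    rw [convexHull_singleton]
    apply Subset.antisymm
    · rintro x ⟨hxY, _⟩; exact hY0 x hxY
    · rintro x rfl
      refine ⟨Y.zero_mem, ?_⟩
      show nu Dn 0 ≤ 1
      rw [hG.nu_zero]; norm_num
  · push_neg at hY0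
    set P : Set X := {x : X | x ∈ Y ∧ nu Dn x ≤ 1} with hP
    set S : Set X := {x : X | x ∈ Y ∧ nu Dn x = 1} with hS
    have hYcl : IsClosed (Y : Set X) := Submodule.closed_of_finiteDimensional Y
    have hScl : IsClosed S := by
      have hSeq : S = (Y : Set X) ∩ (nu Dn) ⁻¹' {1} := rfl
      rw [hSeq]
      exact hYcl.inter (isClosed_singleton.preimage hG.nu_continuous)
    have hSb : ∀ x ∈ S, ‖x‖ ≤ 1 := fun x hx => (hG.norm_le_nu x).trans_eq hx.2
    have hScomp : IsCompact S := isCompact_of_sub Y (fun x hx => hx.1) hScl hSb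
    -- local cover lemma
    have hcover : ∀ x₀ : S, ∃ r : ℝ, 0 < r ∧ ∃ G₀ : Set (StrongDual ℝ X), G₀.Finite ∧ G₀ ⊆ Dd Dn ∧
        ∀ x : X, dist x (x₀ : X) < r → ∃ f ∈ G₀, f x = nu Dn x := by
      rintro ⟨x₀, hx₀Y, hx₀⟩
      simp only
      have hx₀ne : x₀ ≠ 0 := hG.ne_zero_of_nu_eq_one hx₀
      have hx₀pos : 0 < ‖x₀‖ := norm_pos_iff.2 hx₀ne
      obtain ⟨m, hm⟩ := hG.exists_lower x₀
      set gap : ℝ := (lam (m + 1) - lam (m + 2)) * ‖x₀‖ with hgap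
      have hgappos : 0 < gap := by
        have := hG.lam_anti (Nat.lt_succ_self (m + 1)); nlinarith
      set den : ℝ := lam (m + 2) + (1 + ε) + 1 with hden
      have hl2pos : (0:ℝ) < lam (m + 2) := lt_of_lt_of_le one_pos (hG.lam_ge _)
      have hdenpos : 0 < den := by have := hG.eps_pos; nlinarith
      refine ⟨gap / den, div_pos hgappos hdenpos, ⋃ n ∈ Finset.range (m + 2), Dn n,
        Set.Finite.biUnion (Finset.range (m + 2)).finite_toSet (fun n _ => hG.fin n),
        ?_, ?_⟩
      · intro f hf
        simp only [mem_iUnion] at hf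
        obtain ⟨n, _, hn⟩ := hf
        exact mem_iUnion.2 ⟨n, hn⟩
      · intro x hxr
        apply hG.attain_of
        rw [dist_eq_norm] at hxr
        have hLip := hG.nu_lipschitz x x₀
        have hnorm : ‖x‖ ≤ ‖x₀‖ + ‖x - x₀‖ := by
          have h := norm_sub_norm_le x x₀; linarith
        have habs := abs_le.1 hLip
        have hr : ‖x - x₀‖ < gap / den := hxr
        have hrden : den * (gap / den) = gap := by field_simp
        have hnn : (0:ℝ) ≤ ‖x - x₀‖ := norm_nonneg _
        nlinarith [hG.eps_pos, norm_nonneg x]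
    choose r hr G₀ hG₀fin hG₀sub hG₀max using hcover
    obtain ⟨t, ht⟩ := hScomp.elim_finite_subcover (fun i : S => Metric.ball (i : X) (r i))
      (fun i => Metric.isOpen_ball)
      (fun x hx => mem_iUnion.2 ⟨⟨x, hx⟩, Metric.mem_ball_self (hr _)⟩)
    set G : Set (StrongDual ℝ X) := ⋃ i ∈ t, G₀ i with hGdef
    have hGfin : G.Finite := Set.Finite.biUnion t.finite_toSet (fun i _ => hG₀fin i)
    have hGsub : G ⊆ Dd Dn := by
      intro f hf
      simp only [hGdef, mem_iUnion] at hf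
      obtain ⟨i, _, hi⟩ := hf; exact hG₀sub i hi
    have hGmax : ∀ x ∈ S, ∃ f ∈ G, f x = nu Dn x := by
      intro x hx
      have := ht hx
      simp only [mem_iUnion] at this
      obtain ⟨i, hit, hxb⟩ := this
      obtain ⟨f, hf, hfx⟩ := hG₀max i x (Metric.mem_ball.1 hxb)
      refine ⟨f, ?_, hfx⟩
      simp only [hGdef, mem_iUnion]
      exact ⟨i, hit, hf⟩
    -- P as a finite intersection of halfspaces
    have hPQ : P = {x : X | x ∈ Y ∧ ∀ f ∈ G, f x ≤ 1} := by
      apply Subset.antisymm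
      · rintro x ⟨hxY, hxle⟩
        exact ⟨hxY, fun f hf => (hG.apply_le_nu (hGsub hf) x).trans hxle⟩
      · rintro x ⟨hxY, hxle⟩
        refine ⟨hxY, ?_⟩
        by_contra hc
        push_neg at hc
        have hnupos : 0 < nu Dn x := lt_trans one_pos hc
        set x' : X := (nu Dn x)⁻¹ • x with hx'
        have hx'Y : x' ∈ Y := Y.smul_mem _ hxY
        have hx'nu : nu Dn x' = 1 := by
          rw [hx', hG.nu_smul_nonneg (by positivity)]
          field_simp
        obtain ⟨f, hfG, hfx'⟩ := hGmax x' ⟨hx'Y, hx'nu⟩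
        have hfx : f x = nu Dn x := by
          have hxeq : x = (nu Dn x) • x' := by
            rw [hx', smul_smul]
            field_simp
            rw [one_smul]
          calc f x = f ((nu Dn x) • x') := by rw [← hxeq]
            _ = nu Dn x * f x' := by rw [map_smul]; rfl
            _ = nu Dn x := by rw [hfx', hx'nu, mul_one]
        have := hxle f hfG
        linarith
    have hPconv : Convex ℝ P := by
      intro x hx y hy a b ha hb hab
      refine ⟨Y.add_mem (Y.smul_mem a hx.1) (Y.smul_mem b hy.1), ?_⟩
      show nu Dn (a • x + b • y) ≤ 1
      calc nu Dn (a • x + b • y) ≤ nu Dn (a • x) + nu Dn (b • y) := hG.nu_add_le _ _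
        _ = a * nu Dn x + b * nu Dn y := by
            rw [hG.nu_smul_nonneg ha, hG.nu_smul_nonneg hb]
        _ ≤ a * 1 + b * 1 := by
            have := hx.2; have := hy.2
            gcongr <;> assumption
        _ = 1 := by linarith
    have hPcl : IsClosed P := by
      have hPeq : P = (Y : Set X) ∩ (nu Dn) ⁻¹' (Iic 1) := rfl
      rw [hPeq]
      exact hYcl.inter (isClosed_Iic.preimage hG.nu_continuous)
    have hPb : ∀ x ∈ P, ‖x‖ ≤ 1 := fun x hx => (hG.norm_le_nu x).trans hx.2
    have hPcomp : IsCompact P := isCompact_of_sub Y (fun x hx => hx.1) hPcl hPb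
    -- extreme points are finite
    set A : X → Set (StrongDual ℝ X) := fun e => {f | f ∈ G ∧ f e = 1} with hA
    have hinj : Set.InjOn A (P.extremePoints ℝ) := by
      rintro e₁ he₁ e₂ he₂ hAe
      by_contra hne
      have he₁P : e₁ ∈ P := he₁.1
      have he₂P : e₂ ∈ P := he₂.1
      set Gs := hGfin.toFinset with hGs
      set Gs' := Gs.filter (fun f : StrongDual ℝ X => f e₁ < 1) with hGs'
      set tt : ℝ := if h : Gs'.Nonempty
        then min 1 (Gs'.inf' h (fun f => (1 - f e₁) / (|f e₁ - f e₂| + 1))) else 1 with htt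
      have httpos : 0 < tt := by
        rw [htt]
        split_ifs with h
        · apply lt_min one_pos
          rw [Finset.lt_inf'_iff]
          intro f hf
          have hf1 : f e₁ < 1 := (Finset.mem_filter.1 hf).2
          have : (0:ℝ) < |f e₁ - f e₂| + 1 := by positivity
          apply div_pos (by linarith) this
        · exact one_pos
      have httle : ∀ f ∈ Gs', tt ≤ (1 - f e₁) / (|f e₁ - f e₂| + 1) := by
        intro f hf
        have h : Gs'.Nonempty := ⟨f, hf⟩
        rw [htt, dif_pos h]
        exact (min_le_right _ _).trans (Finset.inf'_le _ hf)
      have hmem : ∀ σ : ℝ, |σ| ≤ tt → e₁ + σ • (e₁ - e₂) ∈ P := by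
        intro σ hσ
        rw [hPQ]
        refine ⟨Y.add_mem he₁P.1 (Y.smul_mem _ (Y.sub_mem he₁P.1 he₂P.1)), ?_⟩
        intro f hfG
        have hfe₁le : f e₁ ≤ 1 := (hG.apply_le_nu (hGsub hfG) e₁).trans he₁P.2
        have hcomp : f (e₁ + σ • (e₁ - e₂)) = f e₁ + σ * (f e₁ - f e₂) := by
          rw [map_add, map_smul, map_sub]; rfl
        rw [hcomp]
        rcases eq_or_lt_of_le hfe₁le with heq | hlt
        · have hf2 : f e₂ = 1 := by
            have hfa : f ∈ A e₁ := ⟨hfG, heq⟩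
            rw [hAe] at hfa
            exact hfa.2
          rw [heq, hf2]
          simp
        · have hfGs' : f ∈ Gs' := Finset.mem_filter.2 ⟨hGfin.mem_toFinset.2 hfG, hlt⟩
          have h1 := httle f hfGs'
          have h2 : σ * (f e₁ - f e₂) ≤ |σ| * |f e₁ - f e₂| := by
            calc σ * (f e₁ - f e₂) ≤ |σ * (f e₁ - f e₂)| := le_abs_self _
              _ = |σ| * |f e₁ - f e₂| := abs_mul _ _
          have h3 : |σ| * |f e₁ - f e₂| ≤ tt * |f e₁ - f e₂| := by gcongr
          have h4 : tt * |f e₁ - f e₂| ≤ (1 - f e₁) / (|f e₁ - f e₂| + 1) * |f e₁ - f e₂| := by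
            gcongr
          have h5 : (1 - f e₁) / (|f e₁ - f e₂| + 1) * |f e₁ - f e₂| ≤ 1 - f e₁ := by
            rw [div_mul_eq_mul_div, div_le_iff₀ (by positivity)]
            nlinarith [abs_nonneg (f e₁ - f e₂)]
          linarith
      have hz₁ : e₁ + tt • (e₁ - e₂) ∈ P := hmem tt (by rw [abs_of_pos httpos])
      have hz₂ : e₁ + (-tt) • (e₁ - e₂) ∈ P := hmem (-tt) (by
        rw [abs_neg, abs_of_pos httpos])
      have hseg : e₁ ∈ openSegment ℝ (e₁ + tt • (e₁ - e₂)) (e₁ + (-tt) • (e₁ - e₂)) := by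
        refine ⟨1/2, 1/2, by norm_num, by norm_num, by norm_num, ?_⟩
        module
      obtain ⟨-, hext⟩ := mem_extremePoints.1 he₁
      obtain ⟨hq, -⟩ := hext (e₁ + tt • (e₁ - e₂)) hz₁ (e₁ + (-tt) • (e₁ - e₂)) hz₂ hseg
      have hzero : tt • (e₁ - e₂) = 0 := by
        have := hq
        rwa [add_eq_left] at this
      rcases smul_eq_zero.1 hzero with h | h
      · exact httpos.ne' h
      · exact hne (sub_eq_zero.1 h)
    have hTfin : (P.extremePoints ℝ).Finite := by
      apply Set.Finite.of_finite_image ?_ hinj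
      apply hGfin.finite_subsets.subset
      rintro _ ⟨e, _, rfl⟩
      intro f hf
      exact hf.1
    refine ⟨P.extremePoints ℝ, hTfin, ?_⟩
    have hKM := closure_convexHull_extremePoints hPcomp hPconv
    have hclosed : IsClosed (convexHull ℝ (P.extremePoints ℝ)) :=
      (hTfin.isCompact_convexHull ℝ).isClosed
    conv_lhs => rw [← hKM]
    rw [hclosed.closure_eq]

end Good

end Stmt13Aux

open Stmt13Aux in
theorem stmt13' {X : Type*} [NormedAddCommGroup X] [NormedSpace ℝ X] [CompleteSpace X]
    (Kc : ℕ → Set (StrongDual ℝ X)) (hKc : ∀ n, IsCompact (Kc n))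
    (hKball : (⋃ n, Kc n) ⊆ {f : StrongDual ℝ X | ‖f‖ ≤ 1})
    (B : Set (StrongDual ℝ X)) (hBK : B ⊆ ⋃ n, Kc n)
    (hB : IsBoundaryFor (fun x : X => ‖x‖) B)
    (ε : ℝ) (hε : 0 < ε) :
    ∃ ν : Seminorm ℝ X,
      (∀ x : X, (1 - ε) * ‖x‖ ≤ ν x ∧ ν x ≤ (1 + ε) * ‖x‖) ∧
      IsPolyhedralNorm (fun x => ν x) ∧
      ∃ D : Set (StrongDual ℝ X), IsBoundaryFor (fun x => ν x) D ∧ PropertyStar D := by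
  classical
  by_cases htriv : ∀ x : X, x = 0
  · refine ⟨0, ?_, ?_, ∅, ⟨?_, ?_⟩, ?_⟩
    · intro x
      rw [htriv x]
      simp
    · intro Y _
      refine ⟨{0}, finite_singleton 0, ?_⟩
      rw [convexHull_singleton]
      apply Subset.antisymm
      · rintro x ⟨_, _⟩
        exact htriv x
      · rintro x rfl
        exact ⟨Y.zero_mem, by simp⟩
    · intro f hf
      exact absurd hf (notMem_empty f)
    · intro x hx
      exfalso
      rw [htriv x] at hx
      simp at hx
    · intro g hg x hx
      exfalso
      have := hg univ isOpen_univ (mem_univ _)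
      apply this.mono (fun f hf => hf.1)
      exact finite_empty
  · push_neg at htriv
    obtain ⟨x₀, hx₀⟩ := htriv
    -- the scalars
    set lam : ℕ → ℝ := fun n => 1 + ε / 2 + ε / 2 ^ (n + 1) with hlam
    have hlam_pos : ∀ n, 0 < lam n := by
      intro n
      have : (0:ℝ) < ε / 2 ^ (n + 1) := by positivity
      have : (0:ℝ) < ε / 2 := by positivity
      simp only [hlam]
      linarith
    have hlam_ge : ∀ n, 1 ≤ lam n := by
      intro n
      have h1 : (0:ℝ) < ε / 2 ^ (n + 1) := by positivity
      have h2 : (0:ℝ) < ε / 2 := by positivity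
      simp only [hlam]
      linarith
    have hlam_le : ∀ n, lam n ≤ 1 + ε := by
      intro n
      have h2 : (2:ℝ) ≤ 2 ^ (n + 1) := by
        calc (2:ℝ) = 2 ^ 1 := (pow_one 2).symm
          _ ≤ 2 ^ (n + 1) := by
            apply pow_le_pow_right₀ one_le_two
            omega
      have h1 : ε / 2 ^ (n + 1) ≤ ε / 2 := by
        apply div_le_div_of_nonneg_left hε.le (by norm_num) h2
      simp only [hlam]
      linarith
    have hlam_anti : StrictAnti lam := by
      intro a b hab
      have h2 : (2:ℝ) ^ (a + 1) < 2 ^ (b + 1) := by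
        apply pow_lt_pow_right₀ one_lt_two
        omega
      have : ε / 2 ^ (b + 1) < ε / 2 ^ (a + 1) :=
        div_lt_div_of_pos_left hε (by positivity) h2
      simp only [hlam]
      linarith
    -- the nets
    set rho : ℕ → ℝ := fun n => (lam n - lam (n + 1)) / lam n with hrho
    have hrho_pos : ∀ n, 0 < rho n := by
      intro n
      apply div_pos _ (hlam_pos n)
      have := hlam_anti (lt_add_one n)
      linarith
    have hnet : ∀ n, ∃ t, t ⊆ Kc n ∧ Set.Finite t ∧ Kc n ⊆ ⋃ y ∈ t, Metric.ball y (rho n) :=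
      fun n => Metric.finite_approx_of_totallyBounded (hKc n).totallyBounded (rho n) (hrho_pos n)
    choose F hFsub hFfin hFcov using hnet
    set Dn : ℕ → Set (StrongDual ℝ X) := fun n =>
      (fun f => lam n • f) '' (F n) ∪ (fun f => -(lam n • f)) '' (F n) with hDn
    -- norm bound for elements of F n
    have hFnorm : ∀ n, ∀ f ∈ F n, ‖f‖ ≤ 1 := by
      intro n f hf
      exact hKball (mem_iUnion.2 ⟨n, hFsub n hf⟩)
    have hbound : ∀ n, ∀ f ∈ Dn n, ∀ x : X, f x ≤ lam n * ‖x‖ := by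
      intro n f hf x
      have key : ∀ f₀ ∈ F n, |(lam n • f₀ : StrongDual ℝ X) x| ≤ lam n * ‖x‖ := by
        intro f₀ hf₀
        have h1 : ‖(lam n • f₀ : StrongDual ℝ X) x‖ ≤ ‖(lam n • f₀ : StrongDual ℝ X)‖ * ‖x‖ :=
          (lam n • f₀ : StrongDual ℝ X).le_opNorm x
        have h2 : ‖(lam n • f₀ : StrongDual ℝ X)‖ = |lam n| * ‖f₀‖ := by
          rw [norm_smul, Real.norm_eq_abs]
        rw [h2, abs_of_pos (hlam_pos n)] at h1
        have h3 : ‖f₀‖ ≤ 1 := hFnorm n f₀ hf₀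
        have := norm_nonneg x
        have := (hlam_pos n).le
        calc |(lam n • f₀ : StrongDual ℝ X) x| = ‖(lam n • f₀ : StrongDual ℝ X) x‖ := rfl
          _ ≤ lam n * ‖f₀‖ * ‖x‖ := h1
          _ ≤ lam n * 1 * ‖x‖ := by gcongr
          _ = lam n * ‖x‖ := by ring
      rcases hf with ⟨f₀, hf₀, rfl⟩ | ⟨f₀, hf₀, rfl⟩
      · exact (le_abs_self _).trans (key f₀ hf₀)
      · have h := key f₀ hf₀
        have : (-(lam n • f₀) : StrongDual ℝ X) x = -((lam n • f₀ : StrongDual ℝ X) x) := rfl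
        rw [this]
        calc -((lam n • f₀ : StrongDual ℝ X) x) ≤ |(lam n • f₀ : StrongDual ℝ X) x| := neg_le_abs _
          _ ≤ lam n * ‖x‖ := h
    -- the key property
    have hkey0 : ∀ x : X, x ≠ 0 → ∃ m, ∃ h ∈ Dn m, lam (m + 1) * ‖x‖ ≤ h x := by
      intro x hx
      have hxn : (0:ℝ) < ‖x‖ := norm_pos_iff.2 hx
      set y : X := ‖x‖⁻¹ • x with hy
      have hyn : ‖y‖ = 1 := by
        rw [hy, norm_smul, Real.norm_eq_abs, abs_of_pos (by positivity)]
        field_simp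
      obtain ⟨f, hfB, hfy⟩ := hB.2 y hyn
      have hfx : f x = ‖x‖ := by
        have hxy : x = ‖x‖ • y := by
          rw [hy, smul_smul]
          field_simp
          rw [one_smul]
        calc f x = f (‖x‖ • y) := by rw [← hxy]
          _ = ‖x‖ * f y := by rw [map_smul]; rfl
          _ = ‖x‖ := by rw [hfy, mul_one]
      obtain ⟨m, hfm⟩ := mem_iUnion.1 (hBK hfB)
      have := hFcov m hfm
      simp only [mem_iUnion] at this
      obtain ⟨y₀, hy₀F, hy₀b⟩ := this
      have hdist : ‖f - y₀‖ < rho m := by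
        rw [← dist_eq_norm]
        exact Metric.mem_ball.1 hy₀b
      have hy₀x : (1 - rho m) * ‖x‖ ≤ y₀ x := by
        have h1 : (f - y₀) x ≤ ‖f - y₀‖ * ‖x‖ := by
          calc (f - y₀) x ≤ |(f - y₀) x| := le_abs_self _
            _ = ‖(f - y₀) x‖ := rfl
            _ ≤ ‖f - y₀‖ * ‖x‖ := (f - y₀).le_opNorm x
        have h2 : (f - y₀) x = f x - y₀ x := rfl
        have h3 : ‖f - y₀‖ * ‖x‖ ≤ rho m * ‖x‖ := by nlinarith
        rw [h2, hfx] at h1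
        nlinarith
      refine ⟨m, lam m • y₀, Or.inl ⟨y₀, hy₀F, rfl⟩, ?_⟩
      have happ : (lam m • y₀ : StrongDual ℝ X) x = lam m * (y₀ x) := rfl
      rw [happ]
      have hcalc : lam m * (1 - rho m) = lam (m + 1) := by
        rw [hrho]
        simp only
        rw [mul_sub, mul_div_cancel₀ _ (hlam_pos m).ne']
        ring
      have hlm := (hlam_pos m).le
      nlinarith
    have hG : Good Dn lam ε := by
      refine ⟨?_, hbound, ?_, hlam_anti, hlam_ge, hlam_le, hε, ?_⟩
      · intro n
        exact ((hFfin n).image _).union ((hFfin n).image _)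
      · intro n f hf
        rcases hf with ⟨f₀, hf₀, rfl⟩ | ⟨f₀, hf₀, rfl⟩
        · exact Or.inr ⟨f₀, hf₀, rfl⟩
        · refine Or.inl ⟨f₀, hf₀, ?_⟩
          simp
      · intro x
        by_cases hx : x = 0
        · obtain ⟨m, h, hh, _⟩ := hkey0 x₀ hx₀
          refine ⟨m, h, hh, ?_⟩
          rw [hx]
          simp
        · exact hkey0 x hx
    refine ⟨hG.nuS, ?_, hG.polyhedral, Dd Dn, hG.isBoundaryFor, hG.propertyStar⟩
    intro x
    constructor
    · have h1 := hG.norm_le_nu x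
      have h2 := norm_nonneg x
      have : (1 - ε) * ‖x‖ ≤ ‖x‖ := by nlinarith
      exact this.trans h1
    · exact hG.nu_le x


theorem stmt13 {X : Type*} [NormedAddCommGroup X] [NormedSpace ℝ X] [CompleteSpace X]
    (Kc : ℕ → Set (StrongDual ℝ X)) (hKc : ∀ n, IsCompact (Kc n))
    (hKball : (⋃ n, Kc n) ⊆ {f : StrongDual ℝ X | ‖f‖ ≤ 1})
    (B : Set (StrongDual ℝ X)) (hBK : B ⊆ ⋃ n, Kc n)
    (hB : IsBoundaryFor (fun x : X => ‖x‖) B)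
    (ε : ℝ) (hε : 0 < ε) :
    ∃ ν : Seminorm ℝ X,
      (∀ x : X, (1 - ε) * ‖x‖ ≤ ν x ∧ ν x ≤ (1 + ε) * ‖x‖) ∧
      IsPolyhedralNorm (fun x => ν x) ∧
      ∃ D : Set (StrongDual ℝ X), IsBoundaryFor (fun x => ν x) D ∧ PropertyStar D :=
  stmt13' Kc hKc hKball B hBK hB ε hε

end
end
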